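/- arXiv:2208.03701 — 4 statements merged into one kernel-verified Lean document; each statement's English description precedes it below -/
import Mathlib

section
/- Let φ ∈ AC (i.e., t ↦ φ(t,i) absolutely continuous for each i ∈ S) satisfy: (i) φ(T,i) = g(T,i); (ii) φ(t,i) ≤ g(t,i) for all t; (iii) at a.e. t with φ(t,i) < g(t,i), dφ(t,i)/dt ≤ -H_i(t,φ(t)); (iv) at a.e. t, dφ(t,i)/dt ≥ -H_i(t,φ(t)). If ψ is another function in AC satisfying (i)-(iv), then φ = ψ. -/
open Set MeasureTheory Metric Filter intervalIntegral
open scoped Topology Interval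

section Aux

lemma ae_hasDerivAt_primitive (f : ℝ → ℝ) (hf : Integrable f) :
    ∀ᵐ t : ℝ, HasDerivAt (fun x => ∫ s in (0:ℝ)..x, f s) (f t) t := by
  have hloc : LocallyIntegrable f volume := hf.locallyIntegrable
  filter_upwards [IsUnifLocDoublingMeasure.ae_tendsto_average_norm_sub
    (volume : Measure ℝ) hloc 1] with x hx
  have hA : Tendsto (fun y : ℝ => ⨍ z in closedBall x |y - x|, ‖f z - f x‖)
      (𝓝[≠] x) (𝓝 0) := by
    apply hx (fun _ => x) (fun y => |y - x|)
    · have h1 : Tendsto (fun y : ℝ => |y - x|) (𝓝 x) (𝓝 0) := by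
        have h2 : Continuous (fun y : ℝ => |y - x|) :=
          continuous_abs.comp (continuous_id.sub continuous_const)
        simpa using h2.tendsto x
      refine tendsto_nhdsWithin_of_tendsto_nhds_of_eventually_within _
        (h1.mono_left nhdsWithin_le_nhds) ?_
      filter_upwards [self_mem_nhdsWithin] with y (hy : y ≠ x)
      exact abs_pos.mpr (sub_ne_zero.mpr hy)
    · filter_upwards with y
      simp only [mem_closedBall, dist_self, one_mul]
      positivity
  -- now convert to HasDerivAt
  rw [hasDerivAt_iff_tendsto]
  have key : ∀ y : ℝ, y ≠ x →
      ‖y - x‖⁻¹ * ‖(∫ s in (0:ℝ)..y, f s) - (∫ s in (0:ℝ)..x, f s) - (y - x) • f x‖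
        ≤ 2 * ⨍ z in closedBall x |y - x|, ‖f z - f x‖ := by
    intro y hy
    have hint : ∀ a b : ℝ, IntervalIntegrable f volume a b := fun a b =>
      hf.intervalIntegrable
    have e1 : (∫ s in (0:ℝ)..y, f s) - (∫ s in (0:ℝ)..x, f s) = ∫ s in x..y, f s := by
      rw [← intervalIntegral.integral_add_adjacent_intervals (hint 0 x) (hint x y)]
      ring
    have e2 : (y - x) • f x = ∫ s in x..y, f x := by
      simp [intervalIntegral.integral_const, smul_eq_mul]
    rw [e1, e2, ← intervalIntegral.integral_sub (hint x y)
      (intervalIntegrable_const)]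
    have hsub : Ι x y ⊆ closedBall x |y - x| := by
      intro s hs
      unfold Set.uIoc at hs
      obtain ⟨h1, h2⟩ := hs
      have habs : |y - x| = max x y - min x y := by
        rw [max_sub_min_eq_abs, abs_sub_comm]
      have := min_le_left x y
      have := le_max_left x y
      rw [mem_closedBall, Real.dist_eq, abs_le]
      constructor <;> [linarith [h1.le]; linarith]
    have hb : (∫ s in Ι x y, ‖f s - f x‖) ≤ ∫ z in closedBall x |y - x|, ‖f z - f x‖ := by
      apply setIntegral_mono_set
      · exact ((hf.integrableOn.sub (integrableOn_const
          (measure_closedBall_lt_top).ne)).norm)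
      · filter_upwards with z using norm_nonneg _
      · exact HasSubset.Subset.eventuallyLE hsub
    have havg : (∫ z in closedBall x |y - x|, ‖f z - f x‖)
        = (2 * |y - x|) * ⨍ z in closedBall x |y - x|, ‖f z - f x‖ := by
      rw [setAverage_eq, smul_eq_mul, Real.volume_real_closedBall (abs_nonneg _)]
      rw [← mul_assoc, mul_inv_cancel₀ (by
        have : 0 < |y - x| := abs_pos.mpr (sub_ne_zero.mpr hy)
        positivity), one_mul]
    calc ‖y - x‖⁻¹ * ‖∫ s in x..y, (f s - f x)‖
        ≤ ‖y - x‖⁻¹ * ∫ s in Ι x y, ‖f s - f x‖ := by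
          apply mul_le_mul_of_nonneg_left
            (intervalIntegral.norm_integral_le_integral_norm_uIoc) (by positivity)
      _ ≤ ‖y - x‖⁻¹ * ((2 * |y - x|) * ⨍ z in closedBall x |y - x|, ‖f z - f x‖) := by
          rw [← havg]
          exact mul_le_mul_of_nonneg_left hb (by positivity)
      _ = 2 * ⨍ z in closedBall x |y - x|, ‖f z - f x‖ := by
          rw [Real.norm_eq_abs]
          have h0 : |y - x| ≠ 0 := abs_ne_zero.mpr (sub_ne_zero.mpr hy)
          field_simp
  have h2A : Tendsto (fun y : ℝ => 2 * ⨍ z in closedBall x |y - x|, ‖f z - f x‖)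
      (𝓝[≠] x) (𝓝 0) := by
    simpa using hA.const_mul 2
  have hne : Tendsto (fun y : ℝ => ‖y - x‖⁻¹ *
      ‖(∫ s in (0:ℝ)..y, f s) - (∫ s in (0:ℝ)..x, f s) - (y - x) • f x‖)
      (𝓝[≠] x) (𝓝 0) := by
    apply squeeze_zero' (Filter.Eventually.of_forall fun y => by positivity) _ h2A
    filter_upwards [self_mem_nhdsWithin] with y (hy : y ≠ x) using key y hy
  rw [← nhdsNE_sup_pure x, Filter.tendsto_sup]
  refine ⟨hne, ?_⟩
  have : (fun y : ℝ => ‖y - x‖⁻¹ *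
      ‖(∫ s in (0:ℝ)..y, f s) - (∫ s in (0:ℝ)..x, f s) - (y - x) • f x‖) x = 0 := by
    simp
  rw [Filter.tendsto_pure_left]
  intro s hs
  simpa [this] using mem_of_mem_nhds hs

lemma infsup_le_infsup_add {U V : Type*} [TopologicalSpace U] [CompactSpace U] [Nonempty U]
    [TopologicalSpace V] [CompactSpace V] [Nonempty V]
    (A B : U → V → ℝ) (hA : Continuous fun p : U × V => A p.1 p.2)
    (hB : Continuous fun p : U × V => B p.1 p.2) (ε : ℝ)
    (hAB : ∀ u v, A u v ≤ B u v + ε) :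
    (⨅ u, ⨆ v, A u v) ≤ (⨅ u, ⨆ v, B u v) + ε := by
  obtain ⟨MA, hMA⟩ := (isCompact_range hA).bddAbove
  obtain ⟨mA, hmA⟩ := (isCompact_range hA).bddBelow
  obtain ⟨MB, hMB⟩ := (isCompact_range hB).bddAbove
  obtain ⟨mB, hmB⟩ := (isCompact_range hB).bddBelow
  simp only [upperBounds, lowerBounds, Set.mem_range, forall_exists_index,
    Set.mem_setOf_eq] at hMA hmA hMB hmB
  have hAu : ∀ u : U, BddAbove (Set.range (A u)) := fun u =>
    ⟨MA, fun x ⟨v, hv⟩ => hv ▸ hMA (u, v) rfl⟩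
  have hBu : ∀ u : U, BddAbove (Set.range (B u)) := fun u =>
    ⟨MB, fun x ⟨v, hv⟩ => hv ▸ hMB (u, v) rfl⟩
  have hSA : BddBelow (Set.range fun u => ⨆ v, A u v) := by
    refine ⟨mA, fun x ⟨u, hu⟩ => hu ▸ ?_⟩
    exact le_trans (hmA (u, Classical.arbitrary V) rfl) (le_ciSup (hAu u) _)
  calc (⨅ u, ⨆ v, A u v) ≤ ⨅ u, ((⨆ v, B u v) + ε) := by
        apply ciInf_mono hSA
        intro u
        apply ciSup_le
        intro v
        exact (hAB u v).trans (add_le_add_left (le_ciSup (hBu u) v) ε)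
    _ = (⨅ u, ⨆ v, B u v) + ε := by
        rw [← ciInf_add]
        refine ⟨mB, fun x ⟨u, hu⟩ => hu ▸ ?_⟩
        exact le_trans (hmB (u, Classical.arbitrary V) rfl) (le_ciSup (hBu u) _)

lemma stopping_bound {T C t : ℝ} (ht : t ∈ Set.Icc 0 T)
    (w fw E : ℝ → ℝ)
    (hw : ∀ x, w x = w 0 + ∫ s in (0:ℝ)..x, fw s)
    (hfw : Integrable fw) (hwc : Continuous w)
    (hEc : Continuous E) (hE0 : ∀ s, 0 ≤ E s) (hC : 0 ≤ C)
    (hwT : w T ≤ 0)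
    (hkey : ∀ᵐ s ∂(volume.restrict (Set.Ioo 0 T)), 0 < w s → -(fw s) ≤ C * E s) :
    w t ≤ C * ∫ s in t..T, E s := by
  have htT : t ≤ T := ht.2
  have hInt : ∀ a b : ℝ, IntervalIntegrable fw volume a b := fun a b =>
    hfw.intervalIntegrable
  have hCE_nonneg : 0 ≤ ∫ s in t..T, E s :=
    intervalIntegral.integral_nonneg htT (fun s _ => hE0 s)
  by_cases h0 : w t ≤ 0
  · exact h0.trans (mul_nonneg hC hCE_nonneg)
  push_neg at h0
  set Z := Icc t T ∩ {s | w s ≤ 0} with hZ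
  have hZc : IsClosed Z := isClosed_Icc.inter (isClosed_le hwc continuous_const)
  have hTZ : T ∈ Z := ⟨⟨htT, le_refl T⟩, hwT⟩
  have hbdd : BddBelow Z := ⟨t, fun s hs => hs.1.1⟩
  set τ := sInf Z with hτ
  have hτZ : τ ∈ Z := hZc.csInf_mem ⟨T, hTZ⟩ hbdd
  have hτT : τ ≤ T := csInf_le hbdd hTZ
  have htτ : t ≤ τ := le_csInf ⟨T, hTZ⟩ (fun s hs => hs.1.1)
  have hpos : ∀ s ∈ Ioo t τ, 0 < w s := by
    intro s hs
    by_contra hle; push_neg at hle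
    have hsZ : s ∈ Z := ⟨⟨hs.1.le, hs.2.le.trans hτT⟩, hle⟩
    exact absurd (csInf_le hbdd hsZ) (not_le.mpr hs.2)
  have hdiff : w τ - w t = ∫ s in t..τ, fw s := by
    have hadd := intervalIntegral.integral_add_adjacent_intervals (hInt 0 t) (hInt t τ)
    rw [hw τ, hw t]
    linarith [hadd]
  have hbound : (∫ s in t..τ, (-(fw s))) ≤ ∫ s in t..τ, C * E s := by
    apply intervalIntegral.integral_mono_ae_restrict (μ := volume) htτ ((hInt t τ).neg)
      ((continuous_const.mul hEc).intervalIntegrable t τ)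
    have h1 : ∀ᵐ s ∂(volume.restrict (Ioo t τ)), -(fw s) ≤ C * E s := by
      have hsub : Ioo t τ ⊆ Ioo 0 T := Ioo_subset_Ioo ht.1 hτT
      have h2 := ae_restrict_of_ae_restrict_of_subset hsub hkey
      filter_upwards [h2, ae_restrict_mem measurableSet_Ioo] with s hs hmem
      exact hs (hpos s hmem)
    rwa [Measure.restrict_congr_set Ioo_ae_eq_Icc] at h1
  have hwτ : w τ ≤ 0 := hτZ.2
  calc w t = w τ - ∫ s in t..τ, fw s := by linarith [hdiff]
    _ ≤ 0 + ∫ s in t..τ, (-(fw s)) := by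
        rw [intervalIntegral.integral_neg]
        linarith [hwτ]
    _ ≤ ∫ s in t..τ, C * E s := by rw [zero_add]; exact hbound
    _ ≤ ∫ s in t..T, C * E s := by
        apply intervalIntegral.integral_mono_interval le_rfl htτ hτT
        · filter_upwards with s using mul_nonneg hC (hE0 s)
        · exact (continuous_const.mul hEc).intervalIntegrable t T
    _ = C * ∫ s in t..T, E s := intervalIntegral.integral_const_mul C E

lemma gronwall_backward {T K : ℝ} (hK : 0 ≤ K) (E : ℝ → ℝ) (hEc : Continuous E)
    (hE0 : ∀ s, 0 ≤ E s)
    (hE : ∀ t ∈ Set.Icc 0 T, E t ≤ K * ∫ s in t..T, E s) :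
    ∀ t ∈ Set.Icc 0 T, E t = 0 := by
  obtain ⟨M, hM⟩ := IsCompact.exists_bound_of_continuousOn
    (isCompact_Icc : IsCompact (Icc (0:ℝ) T)) hEc.continuousOn
  have claim : ∀ n : ℕ, ∀ t ∈ Set.Icc 0 T, E t ≤ M * (K * (T - t)) ^ n / (n.factorial : ℝ) := by
    intro n
    induction n with
    | zero =>
      intro t ht
      simpa using (le_abs_self (E t)).trans ((Real.norm_eq_abs (E t)) ▸ hM t ht)
    | succ n ih =>
      intro t ht
      have h2 : (∫ s in t..T, E s) ≤ ∫ s in t..T, M * (K * (T - s)) ^ n / (n.factorial : ℝ) := by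
        apply intervalIntegral.integral_mono_on ht.2 (hEc.intervalIntegrable _ _)
        · exact ((continuous_const.mul ((continuous_const.mul
            (continuous_const.sub continuous_id)).pow n)).div_const _).intervalIntegrable _ _
        · exact fun s hs => ih s ⟨ht.1.trans hs.1, hs.2⟩
      have h3 : (∫ s in t..T, M * (K * (T - s)) ^ n / (n.factorial : ℝ))
          = M * K ^ n / (n.factorial : ℝ) * ((T - t) ^ (n+1) / (n+1)) := by
        have he : ∀ s : ℝ, M * (K * (T - s)) ^ n / (n.factorial : ℝ) = (M * K ^ n / (n.factorial : ℝ)) * (T - s) ^ n := by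
          intro s; rw [mul_pow]; ring
        rw [intervalIntegral.integral_congr (fun s _ => he s),
          intervalIntegral.integral_const_mul]
        congr 1
        rw [intervalIntegral.integral_comp_sub_left (fun x => x ^ n) T]
        simp [integral_pow]
      calc E t ≤ K * ∫ s in t..T, E s := hE t ht
        _ ≤ K * (M * K ^ n / (n.factorial : ℝ) * ((T - t) ^ (n+1) / (n+1))) :=
            mul_le_mul_of_nonneg_left (h2.trans_eq h3) hK
        _ = M * (K * (T - t)) ^ (n+1) / ((n+1).factorial : ℝ) := by
            rw [mul_pow]
            push_cast [Nat.factorial_succ]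
            have h4 : (n.factorial : ℝ) ≠ 0 := Nat.cast_ne_zero.mpr n.factorial_ne_zero
            have h5 : ((n : ℝ) + 1) ≠ 0 := by positivity
            field_simp
            ring
  intro t ht
  have hlim : Filter.Tendsto (fun n : ℕ => M * (K * (T - t)) ^ n / (n.factorial : ℝ))
      Filter.atTop (𝓝 0) := by
    have h6 := (FloorSemiring.tendsto_pow_div_factorial_atTop (K * (T - t))).const_mul M
    simpa [mul_div_assoc] using h6
  have h7 : E t ≤ 0 := ge_of_tendsto' hlim (fun n => claim n t ht)
  exact le_antisymm h7 (hE0 t)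

end Aux

/-- A real function is absolutely continuous on `[0,T]`: it is the integral of an
integrable function. -/
def IsAC (T : ℝ) (φ : ℝ → ℝ) : Prop :=
  ∃ f : ℝ → ℝ, MeasureTheory.IntegrableOn f (Set.Icc 0 T) ∧
    ∀ t ∈ Set.Icc 0 T, φ t = φ 0 + ∫ s in (0:ℝ)..t, f s

/-- uniqueness of solutions of the Zachrisson equation with unilateral
constraints (conditions (i)–(iv) holding a.e.). -/
theorem zachrisson_uniqueness {d : ℕ} {T Lg Mh : ℝ} (hT : 0 ≤ T)
    {U V : Type*} [MetricSpace U] [CompactSpace U] [Nonempty U]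
    [MetricSpace V] [CompactSpace V] [Nonempty V]
    (Q : ℝ → U → V → Fin d → Fin d → ℝ) (h : ℝ → Fin d → U → V → ℝ)
    (g : ℝ → Fin d → ℝ)
    (hQc : ∀ i j, Continuous fun p : ℝ × U × V => Q p.1 p.2.1 p.2.2 i j)
    (hhc : ∀ i, Continuous fun p : ℝ × U × V => h p.1 i p.2.1 p.2.2)
    (hhb : ∀ t i u v, |h t i u v| ≤ Mh)
    (hQpos : ∀ t u v i j, i ≠ j → 0 ≤ Q t u v i j)
    (hQsum : ∀ t u v i, ∑ j, Q t u v i j = 0)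
    (hLg : ∀ i, ∀ s r : ℝ, |g s i - g r i| ≤ Lg * |s - r|)
    (Ham : Fin d → ℝ → (Fin d → ℝ) → ℝ)
    (hHamDef : ∀ i t w, Ham i t w =
      ⨅ u : U, ⨆ v : V, (∑ j, Q t u v i j * w j + h t i u v))
    (hIsaacs : ∀ i t (w : Fin d → ℝ),
      (⨅ u : U, ⨆ v : V, (∑ j, Q t u v i j * w j + h t i u v)) =
        (⨆ v : V, ⨅ u : U, (∑ j, Q t u v i j * w j + h t i u v)))
    (φ ψ : ℝ → Fin d → ℝ)
    (hφAC : ∀ i, IsAC T (fun t => φ t i)) (hψAC : ∀ i, IsAC T (fun t => ψ t i))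
    (hφ1 : ∀ i, φ T i = g T i) (hψ1 : ∀ i, ψ T i = g T i)
    (hφ2 : ∀ t ∈ Icc 0 T, ∀ i, φ t i ≤ g t i)
    (hψ2 : ∀ t ∈ Icc 0 T, ∀ i, ψ t i ≤ g t i)
    (hφ34 : ∀ i, ∀ᵐ t ∂(volume.restrict (Icc 0 T)), ∀ D : ℝ,
      HasDerivAt (fun s => φ s i) D t →
        (φ t i < g t i → D ≤ -(Ham i t (φ t))) ∧ -(Ham i t (φ t)) ≤ D)
    (hψ34 : ∀ i, ∀ᵐ t ∂(volume.restrict (Icc 0 T)), ∀ D : ℝ,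
      HasDerivAt (fun s => ψ s i) D t →
        (ψ t i < g t i → D ≤ -(Ham i t (ψ t))) ∧ -(Ham i t (ψ t)) ≤ D) :
    ∀ t ∈ Icc 0 T, ∀ i, φ t i = ψ t i := by
  classical
  -- a uniform bound on |Q| over [0,T] × U × V
  have hCij : ∀ i j : Fin d, ∃ c : ℝ, ∀ p : ℝ × U × V,
      p.1 ∈ Icc 0 T → |Q p.1 p.2.1 p.2.2 i j| ≤ c := by
    intro i j
    obtain ⟨c, hc⟩ := IsCompact.exists_bound_of_continuousOn
      ((isCompact_Icc : IsCompact (Icc (0:ℝ) T)).prod isCompact_univ)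
      ((hQc i j).continuousOn)
    exact ⟨c, fun p hp => by
      simpa [Real.norm_eq_abs] using hc p ⟨hp, mem_univ _⟩⟩
  choose Cq hCq using hCij
  set C : ℝ := ∑ p : Fin d × Fin d, |Cq p.1 p.2| with hCdef
  have hC0 : 0 ≤ C := Finset.sum_nonneg (fun p _ => abs_nonneg _)
  have hCb : ∀ t : ℝ, t ∈ Icc 0 T → ∀ u v i j, |Q t u v i j| ≤ C := by
    intro t htm u v i j
    calc |Q t u v i j| ≤ Cq i j := hCq i j (t, u, v) htm
      _ ≤ |Cq i j| := le_abs_self _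
      _ ≤ C := Finset.single_le_sum
          (f := fun p : Fin d × Fin d => |Cq p.1 p.2|)
          (fun p _ => abs_nonneg _) (Finset.mem_univ ((i, j) : Fin d × Fin d))
  -- the Hamiltonian is Lipschitz in w, uniformly for t ∈ [0,T]
  have hHamLip : ∀ i (t : ℝ), t ∈ Icc 0 T → ∀ w w' : Fin d → ℝ,
      |Ham i t w - Ham i t w'| ≤ C * ∑ j, |w j - w' j| := by
    intro i t htm w w'
    have hcont : ∀ w0 : Fin d → ℝ, Continuous fun p : U × V =>
        (∑ j, Q t p.1 p.2 i j * w0 j + h t i p.1 p.2) := by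
      intro w0
      apply Continuous.add
      · apply continuous_finset_sum
        intro j _
        exact ((hQc i j).comp (continuous_const.prodMk continuous_id)).mul continuous_const
      · exact (hhc i).comp (continuous_const.prodMk continuous_id)
    have hptw : ∀ w1 w2 : Fin d → ℝ, ∀ (u : U) (v : V),
        (∑ j, Q t u v i j * w1 j + h t i u v) ≤
          (∑ j, Q t u v i j * w2 j + h t i u v) + C * ∑ j, |w1 j - w2 j| := by
      intro w1 w2 u v
      have hsplit : (∑ j, Q t u v i j * w1 j) - (∑ j, Q t u v i j * w2 j)
          = ∑ j, Q t u v i j * (w1 j - w2 j) := by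
        rw [← Finset.sum_sub_distrib]
        exact Finset.sum_congr rfl fun j _ => by ring
      have hb : (∑ j, Q t u v i j * (w1 j - w2 j)) ≤ ∑ j, C * |w1 j - w2 j| := by
        apply Finset.sum_le_sum
        intro j _
        calc Q t u v i j * (w1 j - w2 j) ≤ |Q t u v i j * (w1 j - w2 j)| := le_abs_self _
          _ = |Q t u v i j| * |w1 j - w2 j| := abs_mul _ _
          _ ≤ C * |w1 j - w2 j| :=
              mul_le_mul_of_nonneg_right (hCb t htm u v i j) (abs_nonneg _)
      rw [← Finset.mul_sum] at hb
      rw [← hsplit] at hb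
      linarith
    rw [hHamDef, hHamDef, abs_sub_le_iff]
    constructor
    · have hle := infsup_le_infsup_add
        (fun u v => ∑ j, Q t u v i j * w j + h t i u v)
        (fun u v => ∑ j, Q t u v i j * w' j + h t i u v)
        (hcont w) (hcont w') (C * ∑ j, |w j - w' j|) (hptw w w')
      linarith
    · have hle := infsup_le_infsup_add
        (fun u v => ∑ j, Q t u v i j * w' j + h t i u v)
        (fun u v => ∑ j, Q t u v i j * w j + h t i u v)
        (hcont w') (hcont w) (C * ∑ j, |w j - w' j|) ?_
      · linarith
      · intro u v
        have := hptw w' w u v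
        have habs : (∑ j, |w' j - w j|) = ∑ j, |w j - w' j| :=
          Finset.sum_congr rfl fun j _ => abs_sub_comm _ _
        rw [habs] at this
        exact this
  -- densities
  choose fφ hfφI hfφ using hφAC
  choose fψ hfψI hfψ using hψAC
  set gφ : Fin d → ℝ → ℝ := fun i => (Icc (0:ℝ) T).indicator (fφ i) with hgφdef
  set gψ : Fin d → ℝ → ℝ := fun i => (Icc (0:ℝ) T).indicator (fψ i) with hgψdef
  have hgφInt : ∀ i, Integrable (gφ i) := fun i =>
    (integrable_indicator_iff measurableSet_Icc).mpr (hfφI i)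
  have hgψInt : ∀ i, Integrable (gψ i) := fun i =>
    (integrable_indicator_iff measurableSet_Icc).mpr (hfψI i)
  set Φ : Fin d → ℝ → ℝ := fun i x => φ 0 i + ∫ s in (0:ℝ)..x, gφ i s with hΦdef
  set Ψ : Fin d → ℝ → ℝ := fun i x => ψ 0 i + ∫ s in (0:ℝ)..x, gψ i s with hΨdef
  have hΦφ : ∀ i, ∀ x ∈ Icc 0 T, Φ i x = φ x i := by
    intro i x hx
    have hx0 : φ x i = φ 0 i + ∫ s in (0:ℝ)..x, fφ i s := hfφ i x hx
    rw [hx0, hΦdef]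
    show φ 0 i + (∫ s in (0:ℝ)..x, gφ i s) = φ 0 i + ∫ s in (0:ℝ)..x, fφ i s
    congr 1
    apply intervalIntegral.integral_congr
    intro s hs
    rw [Set.uIcc_of_le hx.1] at hs
    exact Set.indicator_of_mem (Icc_subset_Icc le_rfl hx.2 hs) (fφ i)
  have hΨψ : ∀ i, ∀ x ∈ Icc 0 T, Ψ i x = ψ x i := by
    intro i x hx
    have hx0 : ψ x i = ψ 0 i + ∫ s in (0:ℝ)..x, fψ i s := hfψ i x hx
    rw [hx0, hΨdef]
    show ψ 0 i + (∫ s in (0:ℝ)..x, gψ i s) = ψ 0 i + ∫ s in (0:ℝ)..x, fψ i s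
    congr 1
    apply intervalIntegral.integral_congr
    intro s hs
    rw [Set.uIcc_of_le hx.1] at hs
    exact Set.indicator_of_mem (Icc_subset_Icc le_rfl hx.2 hs) (fψ i)
  have hΦc : ∀ i, Continuous (Φ i) := fun i =>
    continuous_const.add ((hgφInt i).continuous_primitive 0)
  have hΨc : ∀ i, Continuous (Ψ i) := fun i =>
    continuous_const.add ((hgψInt i).continuous_primitive 0)
  have hΦd : ∀ i, ∀ᵐ x : ℝ, HasDerivAt (Φ i) (gφ i x) x := fun i =>
    (ae_hasDerivAt_primitive _ (hgφInt i)).mono (fun x hx => hx.const_add _)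
  have hΨd : ∀ i, ∀ᵐ x : ℝ, HasDerivAt (Ψ i) (gψ i x) x := fun i =>
    (ae_hasDerivAt_primitive _ (hgψInt i)).mono (fun x hx => hx.const_add _)
  set uu : Fin d → ℝ → ℝ := fun i x => Φ i x - Ψ i x with huudef
  set fu : Fin d → ℝ → ℝ := fun i x => gφ i x - gψ i x with hfudef
  set E : ℝ → ℝ := fun x => ∑ j, |uu j x| with hEdef
  have hEc : Continuous E := continuous_finset_sum _ fun j _ => ((hΦc j).sub (hΨc j)).abs
  have hE0 : ∀ s, 0 ≤ E s := fun s => Finset.sum_nonneg fun j _ => abs_nonneg _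
  have huu0 : ∀ i x, uu i x = uu i 0 + ∫ s in (0:ℝ)..x, fu i s := by
    intro i x
    simp only [huudef, hΦdef, hΨdef, hfudef]
    rw [intervalIntegral.integral_sub ((hgφInt i).intervalIntegrable)
      ((hgψInt i).intervalIntegrable)]
    have e0φ : (∫ s in (0:ℝ)..(0:ℝ), gφ i s) = 0 := intervalIntegral.integral_same
    have e0ψ : (∫ s in (0:ℝ)..(0:ℝ), gψ i s) = 0 := intervalIntegral.integral_same
    rw [e0φ, e0ψ]
    ring
  -- the a.e. differential relations
  have hae : ∀ᵐ s ∂(volume.restrict (Ioo 0 T)), ∀ i,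
      ((φ s i < g s i → gφ i s ≤ -(Ham i s (φ s))) ∧ -(Ham i s (φ s)) ≤ gφ i s) ∧
      ((ψ s i < g s i → gψ i s ≤ -(Ham i s (ψ s))) ∧ -(Ham i s (ψ s)) ≤ gψ i s) := by
    rw [MeasureTheory.ae_all_iff]
    intro i
    have h1 := ae_restrict_of_ae_restrict_of_subset Ioo_subset_Icc_self (hφ34 i)
    have h2 := ae_restrict_of_ae_restrict_of_subset Ioo_subset_Icc_self (hψ34 i)
    have h3 : ∀ᵐ s ∂(volume.restrict (Ioo 0 T)), HasDerivAt (Φ i) (gφ i s) s :=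
      ae_restrict_of_ae (hΦd i)
    have h4 : ∀ᵐ s ∂(volume.restrict (Ioo 0 T)), HasDerivAt (Ψ i) (gψ i s) s :=
      ae_restrict_of_ae (hΨd i)
    filter_upwards [h1, h2, h3, h4, ae_restrict_mem measurableSet_Ioo]
      with s hs1 hs2 hs3 hs4 hmem
    have hnb : Ioo (0:ℝ) T ∈ 𝓝 s := isOpen_Ioo.mem_nhds hmem
    have heqφ : (fun x => φ x i) =ᶠ[𝓝 s] Φ i := by
      filter_upwards [hnb] with x hx using (hΦφ i x (Ioo_subset_Icc_self hx)).symm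
    have heqψ : (fun x => ψ x i) =ᶠ[𝓝 s] Ψ i := by
      filter_upwards [hnb] with x hx using (hΨψ i x (Ioo_subset_Icc_self hx)).symm
    exact ⟨hs1 _ (hs3.congr_of_eventuallyEq heqφ), hs2 _ (hs4.congr_of_eventuallyEq heqψ)⟩
  -- derivative bounds where uu has a sign
  have hkey : ∀ i, ∀ᵐ s ∂(volume.restrict (Ioo 0 T)),
      (0 < uu i s → -(fu i s) ≤ C * E s) ∧ (0 < -(uu i s) → -(-(fu i s)) ≤ C * E s) := by
    intro i
    filter_upwards [hae, ae_restrict_mem measurableSet_Ioo] with s hs hmem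
    have hsI : s ∈ Icc 0 T := Ioo_subset_Icc_self hmem
    have hφs : ∀ j, Φ j s = φ s j := fun j => hΦφ j s hsI
    have hψs : ∀ j, Ψ j s = ψ s j := fun j => hΨψ j s hsI
    have hEeq : E s = ∑ j, |φ s j - ψ s j| := by
      simp only [hEdef, huudef]
      exact Finset.sum_congr rfl fun j _ => by rw [hφs j, hψs j]
    have hlip := hHamLip i s hsI (φ s) (ψ s)
    have hlips := abs_le.mp hlip
    obtain ⟨⟨hφ3, hφ4⟩, ⟨hψ3, hψ4⟩⟩ := hs i
    constructor
    · intro hpos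
      have hlt : ψ s i < φ s i := by
        have e1 := hφs i; have e2 := hψs i
        simp only [huudef] at hpos; linarith
      have hψg : ψ s i < g s i := lt_of_lt_of_le hlt (hφ2 s hsI i)
      have h1 : gψ i s = -(Ham i s (ψ s)) := le_antisymm (hψ3 hψg) hψ4
      simp only [hfudef]
      rw [hEeq]
      linarith [hlips.1, hlips.2, hφ4]
    · intro hneg
      have hlt : φ s i < ψ s i := by
        have e1 := hφs i; have e2 := hψs i
        simp only [huudef] at hneg; linarith
      have hφg : φ s i < g s i := lt_of_lt_of_le hlt (hψ2 s hsI i)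
      have h1 : gφ i s = -(Ham i s (φ s)) := le_antisymm (hφ3 hφg) hφ4
      simp only [hfudef]
      rw [hEeq]
      linarith [hlips.1, hlips.2, hψ4]
  -- main bound via the stopping argument
  have hmain : ∀ t ∈ Icc 0 T, ∀ i, |uu i t| ≤ C * ∫ s in t..T, E s := by
    intro t htm i
    have hTm : T ∈ Icc (0:ℝ) T := right_mem_Icc.mpr hT
    have huuT : uu i T = 0 := by
      simp only [huudef]
      rw [hΦφ i T hTm, hΨψ i T hTm, hφ1 i, hψ1 i]
      ring
    have hwc : Continuous (uu i) := (hΦc i).sub (hΨc i)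
    have hfui : Integrable (fu i) := (hgφInt i).sub (hgψInt i)
    have hd1 : uu i t ≤ C * ∫ s in t..T, E s := by
      apply stopping_bound htm (uu i) (fu i) E (huu0 i) hfui hwc hEc hE0 hC0
        (by rw [huuT])
      exact (hkey i).mono fun s hs => hs.1
    have hd2 : -(uu i t) ≤ C * ∫ s in t..T, E s := by
      apply stopping_bound htm (fun x => -(uu i x)) (fun x => -(fu i x)) E ?_
        hfui.neg hwc.neg hEc hE0 hC0 (by simp [huuT])
      · exact (hkey i).mono fun s hs => hs.2
      · intro x
        have hx0 := huu0 i x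
        show -uu i x = -uu i 0 + ∫ s in (0:ℝ)..x, -(fu i s)
        rw [intervalIntegral.integral_neg]
        linarith
    exact abs_le.mpr ⟨by linarith, hd1⟩
  -- Gronwall
  have hEineq : ∀ t ∈ Icc 0 T, E t ≤ ((d : ℝ) * C) * ∫ s in t..T, E s := by
    intro t htm
    have : E t = ∑ j, |uu j t| := by rw [hEdef]
    rw [this]
    calc (∑ j, |uu j t|) ≤ ∑ _j : Fin d, C * ∫ s in t..T, E s :=
        Finset.sum_le_sum fun j _ => hmain t htm j
      _ = ((d : ℝ) * C) * ∫ s in t..T, E s := by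
        rw [Finset.sum_const, Finset.card_univ, Fintype.card_fin, nsmul_eq_mul]
        ring
  have hEzero := gronwall_backward (mul_nonneg (Nat.cast_nonneg d) hC0) E hEc hE0 hEineq
  intro t htm i
  have h1 : |uu i t| ≤ E t := by
    rw [hEdef]
    exact Finset.single_le_sum (f := fun j => |uu j t|) (fun j _ => abs_nonneg _)
      (Finset.mem_univ i)
  rw [hEzero t htm] at h1
  have h2 : uu i t = 0 := abs_eq_zero.mp (le_antisymm h1 (abs_nonneg _))
  have e1 := hΦφ i t htm
  have e2 := hΨψ i t htm
  simp only [huudef] at h2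
  linarith
end

section
/- With φ_N defined by the recursive scheme (φ_N(T,i) = g(T,i); ψ_N^k solving the backward ODE dψ/dt = -H_i(t,ψ(t)) on [t_N^k, t_N^{k+1}] with terminal data φ_N(t_N^{k+1}); φ_N = min(ψ_N^k, g) on each subinterval), there exists a constant C_1 depending only on M_g, M_h, M_Q, d, T such that |φ_N(t,i)| ≤ C_1 for all N ∈ ℕ, t ∈ [0,T], i ∈ S. One may take C_1 = (M_g + M_h·T)·e^{d·M_Q·T}. -/
open Set

private lemma my_gronwallBound_le {δ K ε x : ℝ} (hδ : 0 ≤ δ) (hK : 0 ≤ K) (hε : 0 ≤ ε)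
    (hx : 0 ≤ x) : gronwallBound δ K ε x ≤ (δ + ε * x) * Real.exp (K * x) := by
  rcases eq_or_lt_of_le hK with hK0 | hK0
  · rw [← hK0, gronwallBound_K0, zero_mul, Real.exp_zero, mul_one]
  · rw [gronwallBound_of_K_ne_0 (ne_of_gt hK0)]
    have hE1 : 1 ≤ Real.exp (K * x) := Real.one_le_exp (mul_nonneg hK hx)
    have h1 := Real.add_one_le_exp (-(K * x))
    rw [Real.exp_neg] at h1
    have h2 := Real.exp_pos (K * x)
    have h3 := inv_mul_cancel₀ (ne_of_gt h2)
    -- exp(Kx) - 1 ≤ K*x*exp(Kx)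
    have key : Real.exp (K * x) - 1 ≤ K * x * Real.exp (K * x) := by nlinarith
    have h4 : ε / K * (Real.exp (K * x) - 1) ≤ ε / K * (K * x * Real.exp (K * x)) :=
      mul_le_mul_of_nonneg_left key (div_nonneg hε hK)
    have h5 : ε / K * (K * x * Real.exp (K * x)) = ε * x * Real.exp (K * x) := by
      field_simp
    nlinarith [h4, h5]

private lemma my_backward_gronwall {E : Type*} [NormedAddCommGroup E] [NormedSpace ℝ E]
    {f f' : ℝ → E} {a b K ε δ : ℝ}
    (hf : ∀ t ∈ Icc a b, HasDerivAt f (f' t) t)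
    (hbound : ∀ t ∈ Icc a b, ‖f' t‖ ≤ K * ‖f t‖ + ε)
    (hb : ‖f b‖ ≤ δ) :
    ∀ t ∈ Icc a b, ‖f t‖ ≤ gronwallBound δ K ε (b - t) := by
  intro t ht
  have key : ∀ x ∈ Icc a b, HasDerivAt (fun x => f (a + b - x)) (-(f' (a + b - x))) x := by
    intro x hx
    have hmem : a + b - x ∈ Icc a b := ⟨by linarith [hx.2], by linarith [hx.1]⟩
    have h1 : HasDerivAt (fun x : ℝ => a + b - x) (-1) x := (hasDerivAt_id x).const_sub (a + b)
    have := (hf _ hmem).scomp x h1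
    rw [neg_one_smul] at this; exact this
  have hcont : ContinuousOn (fun x => f (a + b - x)) (Icc a b) :=
    fun x hx => ((key x hx).continuousAt).continuousWithinAt
  have hga : ‖(fun x => f (a + b - x)) a‖ ≤ δ := by
    simpa [show a + b - a = b by ring] using hb
  have main := norm_le_gronwallBound_of_norm_deriv_right_le hcont
      (fun x hx => (key x (Ico_subset_Icc_self hx)).hasDerivWithinAt)
      hga
      (fun x hx => by
        have hmem : a + b - x ∈ Icc a b := ⟨by linarith [hx.2.le], by linarith [hx.1]⟩
        calc ‖-(f' (a + b - x))‖ = ‖f' (a + b - x)‖ := norm_neg _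
        _ ≤ K * ‖f (a + b - x)‖ + ε := hbound _ hmem)
  have hx : a + b - t ∈ Icc a b := ⟨by linarith [ht.2], by linarith [ht.1]⟩
  have h := main (a + b - t) hx
  simpa [show a + b - (a + b - t) = t by ring, show a + b - t - a = b - t by ring] using h


/-- Lemma 1: uniform boundedness of the approximations `φ_N`:
`|φ_N(t,i)| ≤ C₁ = (M_g + M_h·T)·e^{d·M_Q·T}` for all `N`, `t`, `i`. -/
theorem scheme_uniform_bound {d : ℕ} [NeZero d] {T MQ Mh Mg : ℝ} (hT : 0 ≤ T)
    (H : Fin d → ℝ → (Fin d → ℝ) → ℝ) (g : ℝ → Fin d → ℝ)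
    (hH : ∀ i t w, |H i t w| ≤ (d : ℝ) * MQ * (⨆ j, |w j|) + Mh)
    (hMg : ∀ t ∈ Icc 0 T, ∀ i, |g t i| ≤ Mg) :
    ∀ (N : ℕ), 0 < N → ∀ (φ : ℝ → Fin d → ℝ) (ψ : ℕ → ℝ → Fin d → ℝ),
      (∀ i, φ T i = g T i) →
      (∀ k < N, ∀ t ∈ Icc (T * k / N) (T * (k + 1) / N), ∀ i,
        HasDerivAt (fun s => ψ k s i) (-(H i t (ψ k t))) t) →
      (∀ k < N, ∀ i, ψ k (T * (k + 1) / N) i = φ (T * (k + 1) / N) i) →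
      (∀ k < N, ∀ t ∈ Icc (T * k / N) (T * (k + 1) / N), ∀ i,
        φ t i = min (ψ k t i) (g t i)) →
      ∀ t ∈ Icc 0 T, ∀ i,
        |φ t i| ≤ (Mg + Mh * T) * Real.exp ((d : ℝ) * MQ * T) := by
  intro N hN φ ψ hφT hD hψφ hmin
  set K : ℝ := (d : ℝ) * MQ with hKdef
  have i0 : Fin d := ⟨0, Nat.pos_of_ne_zero (NeZero.ne d)⟩
  -- basic nonnegativity facts
  have hMh : 0 ≤ Mh := by
    have h := hH i0 0 (fun _ => 0)
    have h0 : (⨆ j : Fin d, |(0 : ℝ)|) = 0 := by simp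
    rw [h0] at h
    have := abs_nonneg (H i0 0 (fun _ => 0))
    linarith
  have hK : 0 ≤ K := by
    by_contra hKneg
    push_neg at hKneg
    set c : ℝ := (Mh + 1) / (-K) with hc
    have hcpos : 0 < c := div_pos (by linarith) (by linarith)
    have h := hH i0 0 (fun _ => c)
    have h0 : (⨆ j : Fin d, |c|) = |c| := ciSup_const
    rw [h0, abs_of_pos hcpos] at h
    have hKne : K ≠ 0 := ne_of_lt hKneg
    have hKc : K * c = -(Mh + 1) := by
      rw [hc, div_neg, mul_neg, mul_div_cancel₀ _ hKne]
    have := abs_nonneg (H i0 0 (fun _ => c))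
    rw [hKc] at h
    linarith
  have hMg0 : 0 ≤ Mg := le_trans (abs_nonneg _) (hMg T ⟨hT, le_rfl⟩ i0)
  have hNR : (0 : ℝ) < N := by exact_mod_cast hN
  -- the time-dependent bound
  set M : ℝ → ℝ := fun t => (Mg + Mh * (T - t)) * Real.exp (K * (T - t)) with hMdef
  have hMnonneg : ∀ t, t ≤ T → 0 ≤ M t := fun t ht => by
    have := Real.exp_pos (K * (T - t))
    have : 0 ≤ Mg + Mh * (T - t) := by nlinarith
    positivity
  have hMg_le_M : ∀ t, 0 ≤ t → t ≤ T → Mg ≤ M t := by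
    intro t ht0 htT
    have hE : 1 ≤ Real.exp (K * (T - t)) := Real.one_le_exp (by nlinarith)
    simp only [hMdef]
    calc Mg = Mg * 1 := (mul_one _).symm
      _ ≤ Mg * Real.exp (K * (T - t)) := mul_le_mul_of_nonneg_left hE hMg0
      _ ≤ (Mg + Mh * (T - t)) * Real.exp (K * (T - t)) := by
          apply mul_le_mul_of_nonneg_right ?_ (Real.exp_pos _).le
          nlinarith
  -- the key claim, by induction going backwards through the grid
  have claim : ∀ m : ℕ, ∀ t ∈ Icc (T * ((N - m : ℕ) : ℝ) / N) T, ∀ i, |φ t i| ≤ M t := by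
    intro m
    induction m with
    | zero =>
      intro t ht i
      have hTN : T * ((N - 0 : ℕ) : ℝ) / N = T := by
        simp only [Nat.sub_zero]; field_simp
      rw [hTN] at ht
      have htT : t = T := le_antisymm ht.2 ht.1
      subst htT
      have hMT : M t = Mg := by simp [hMdef]
      rw [hφT i, hMT]
      exact hMg t ⟨hT, le_rfl⟩ i
    | succ m ih =>
      by_cases hm : m < N
      · -- the interesting case
        set k : ℕ := N - (m + 1) with hkdef
        have hkN : k < N := by omega
        have hk1 : k + 1 = N - m := by omega
        set a : ℝ := T * (k : ℝ) / N with hadef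
        set b : ℝ := T * ((k : ℝ) + 1) / N with hbdef
        have hab : a ≤ b := by
          rw [hadef, hbdef]
          gcongr
          linarith
        have hk1N : (k : ℝ) + 1 ≤ N := by exact_mod_cast hkN
        have hbT : b ≤ T := by
          rw [hbdef]
          rw [div_le_iff₀ hNR]
          nlinarith
        have ha0 : 0 ≤ a := by positivity
        have hcast : ((N - m : ℕ) : ℝ) = (k : ℝ) + 1 := by
          rw [← hk1]; push_cast; ring
        have hcast1 : ((N - (m + 1) : ℕ) : ℝ) = (k : ℝ) := by rw [← hkdef]
        -- terminal bound at b
        have hφb : ∀ i, |φ b i| ≤ M b := by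
          intro i
          refine ih b ⟨?_, hbT⟩ i
          rw [hcast]
        have hψb : ‖ψ k b‖ ≤ M b := by
          rw [pi_norm_le_iff_of_nonneg (hMnonneg b hbT)]
          intro i
          rw [Real.norm_eq_abs, hψφ k hkN i]
          exact hφb i
        -- Gronwall on [a, b]
        have hgron := my_backward_gronwall
          (f := fun t => ψ k t) (f' := fun t => fun i => -(H i t (ψ k t)))
          (a := a) (b := b) (K := K) (ε := Mh) (δ := M b)
          (fun t ht => hasDerivAt_pi.mpr (fun i => hD k hkN t ht i))
          (fun t ht => by
            rw [pi_norm_le_iff_of_nonneg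
              (add_nonneg (mul_nonneg hK (norm_nonneg _)) hMh)]
            intro i
            rw [Real.norm_eq_abs, abs_neg]
            refine (hH i t (ψ k t)).trans ?_
            have hsup : (⨆ j, |ψ k t j|) ≤ ‖ψ k t‖ :=
              ciSup_le fun j => (Real.norm_eq_abs (ψ k t j)) ▸ norm_le_pi_norm (ψ k t) j
            have : K * (⨆ j, |ψ k t j|) ≤ K * ‖ψ k t‖ :=
              mul_le_mul_of_nonneg_left hsup hK
            linarith)
          hψb
        -- chain the bound
        have hψbd : ∀ t ∈ Icc a b, ∀ i, |ψ k t i| ≤ M t := by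
          intro t ht i
          have h1 := hgron t ht
          have h2 : gronwallBound (M b) K Mh (b - t) ≤
              (M b + Mh * (b - t)) * Real.exp (K * (b - t)) :=
            my_gronwallBound_le (hMnonneg b hbT) hK hMh (by linarith [ht.2])
          have h3 : (M b + Mh * (b - t)) * Real.exp (K * (b - t)) ≤ M t := by
            simp only [hMdef]
            have hE1 : 1 ≤ Real.exp (K * (T - b)) := Real.one_le_exp (by nlinarith)
            have hE2 : (0:ℝ) < Real.exp (K * (b - t)) := Real.exp_pos _
            have hstep : (Mg + Mh * (T - b)) * Real.exp (K * (T - b)) + Mh * (b - t) ≤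
                (Mg + Mh * (T - t)) * Real.exp (K * (T - b)) := by
              nlinarith [mul_nonneg (mul_nonneg hMh (sub_nonneg.mpr ht.2))
                (sub_nonneg.mpr hE1)]
            have := mul_le_mul_of_nonneg_right hstep hE2.le
            calc ((Mg + Mh * (T - b)) * Real.exp (K * (T - b)) + Mh * (b - t)) *
                  Real.exp (K * (b - t))
                ≤ (Mg + Mh * (T - t)) * Real.exp (K * (T - b)) * Real.exp (K * (b - t)) := this
              _ = (Mg + Mh * (T - t)) * Real.exp (K * (T - t)) := by
                  rw [mul_assoc, ← Real.exp_add]; ring_nf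
          have h4 : |ψ k t i| ≤ ‖ψ k t‖ :=
            (Real.norm_eq_abs (ψ k t i)) ▸ norm_le_pi_norm (ψ k t) i
          linarith
        -- conclude for the extended interval
        intro t ht i
        rcases le_total t b with htb | hbt
        · have htab : t ∈ Icc a b := ⟨ht.1, htb⟩
          have hφval := hmin k hkN t htab i
          have hu := hψbd t htab i
          have hv : |g t i| ≤ M t := by
            refine (hMg t ⟨le_trans ha0 ht.1, ht.2⟩ i).trans ?_
            exact hMg_le_M t (le_trans ha0 ht.1) ht.2
          rw [hφval]
          rw [abs_le] at hu hv ⊢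
          exact ⟨le_min hu.1 hv.1, le_trans (min_le_left _ _) hu.2⟩
        · refine ih t ⟨?_, ht.2⟩ i
          rw [hcast]
          exact hbt
      · -- degenerate case: m ≥ N
        intro t ht i
        have : (N - (m + 1) : ℕ) = (N - m : ℕ) := by omega
        rw [this] at ht
        exact ih t ht i
  -- finish
  intro t ht i
  have h0 : T * ((N - N : ℕ) : ℝ) / N = 0 := by simp
  have hMt := claim N t (by rw [h0]; exact ht) i
  refine hMt.trans ?_
  simp only [hMdef]
  have hE : Real.exp (K * (T - t)) ≤ Real.exp (K * T) :=
    Real.exp_le_exp.mpr (by nlinarith [ht.1])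
  have h1 : Mg + Mh * (T - t) ≤ Mg + Mh * T := by nlinarith [ht.1]
  have h2 : 0 ≤ Mg + Mh * (T - t) := by nlinarith [ht.2]
  calc (Mg + Mh * (T - t)) * Real.exp (K * (T - t))
      ≤ (Mg + Mh * T) * Real.exp (K * T) :=
        mul_le_mul h1 hE (Real.exp_pos _).le (by nlinarith)
end

section
/- Let φ_n → φ uniformly on [0,T]×S, with each φ_n Lipschitz in t with a common constant, and suppose for each n the following holds: whenever φ_n(t',i) < g(t',i) on an interval, then φ_n(ŝ,i) - φ_n(t,i) ≤ -∫_t^{ŝ} H_i(t',φ_n(t'))dt' for t, ŝ in that interval. If t ∈ (0,T) is a point of differentiability of φ(·,i) with φ(t,i) < g(t,i), then dφ(t,i)/dt ≤ -H_i(t, φ(t)). -/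
open Set Filter MeasureTheory Topology

/-- limit passage establishing condition (Z3): at a point of
differentiability of the uniform limit `φ` with `φ(t,i) < g(t,i)`, one has
`dφ(t,i)/dt ≤ -H_i(t,φ(t))`. -/
theorem limit_u_stability {d : ℕ} [NeZero d] {T C3 : ℝ} (hT : 0 ≤ T)
    (H : Fin d → ℝ → (Fin d → ℝ) → ℝ) (g : ℝ → Fin d → ℝ)
    (hHc : ∀ i, Continuous fun p : ℝ × (Fin d → ℝ) => H i p.1 p.2)
    (hgc : ∀ i, Continuous fun t => g t i)
    (φn : ℕ → ℝ → Fin d → ℝ) (φ : ℝ → Fin d → ℝ)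
    (hlip : ∀ n, ∀ s ∈ Icc 0 T, ∀ r ∈ Icc 0 T, ∀ i,
      |φn n s i - φn n r i| ≤ C3 * |s - r|)
    (hconv : TendstoUniformlyOn (fun n t => φn n t) (fun t => φ t) atTop (Icc 0 T))
    -- on any interval where φ_n(·,i) < g(·,i), the integrated differential
    -- inequality holds
    (hineq : ∀ n : ℕ, ∀ i, ∀ a b : ℝ, a ≤ b → Icc a b ⊆ Icc 0 T →
      (∀ t' ∈ Icc a b, φn n t' i < g t' i) →
      ∀ t ∈ Icc a b, ∀ s ∈ Icc a b, t ≤ s →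
        φn n s i - φn n t i ≤ -(∫ t' in t..s, H i t' (φn n t'))) :
    ∀ t ∈ Ioo 0 T, ∀ i, φ t i < g t i → ∀ D : ℝ,
      HasDerivAt (fun s => φ s i) D t → D ≤ -(H i t (φ t)) := by
  intro t ht i hlt D hD
  have htI : t ∈ Icc 0 T := ⟨ht.1.le, ht.2.le⟩
  -- continuity of the φn on [0,T]
  have hφn_cont : ∀ n, ContinuousOn (φn n) (Icc 0 T) := by
    intro n
    apply continuousOn_pi.2
    intro j
    have : LipschitzOnWith (Real.toNNReal C3) (fun s => φn n s j) (Icc 0 T) := by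
      rw [lipschitzOnWith_iff_dist_le_mul]
      intro x hx y hy
      have := hlip n x hx y hy j
      rw [Real.dist_eq, Real.dist_eq]
      calc |φn n x j - φn n y j| ≤ C3 * |x - y| := this
        _ ≤ Real.toNNReal C3 * |x - y| := by
            apply mul_le_mul_of_nonneg_right (Real.le_coe_toNNReal C3) (abs_nonneg _)
    exact this.continuousOn
  have hφ_cont : ContinuousOn φ (Icc 0 T) :=
    hconv.continuousOn (Eventually.of_forall hφn_cont).frequently
  -- bound on ‖φ‖
  obtain ⟨M, hM⟩ : ∃ M, ∀ x ∈ Icc 0 T, ‖φ x‖ ≤ M := by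
    obtain ⟨M, hM⟩ := (isCompact_Icc.image_of_continuousOn hφ_cont).isBounded.subset_closedBall 0
    exact ⟨M, fun x hx => by simpa using hM (mem_image_of_mem φ hx)⟩
  -- bound on H i on a compact set
  obtain ⟨C, hC⟩ : ∃ C, ∀ x ∈ Icc 0 T, ∀ w : Fin d → ℝ, ‖w‖ ≤ M + 1 → |H i x w| ≤ C := by
    have hK : IsCompact ((Icc 0 T) ×ˢ (Metric.closedBall (0 : Fin d → ℝ) (M + 1))) :=
      isCompact_Icc.prod (isCompact_closedBall _ _)
    obtain ⟨C, hC⟩ := hK.exists_bound_of_continuousOn (hHc i).continuousOn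
    exact ⟨C, fun x hx w hw => by
      simpa [Real.norm_eq_abs] using hC (x, w) ⟨hx, by simpa [Metric.mem_closedBall, dist_eq_norm] using hw⟩⟩
  -- eventually all φn are in the ball of radius M+1
  have hconv' := Metric.tendstoUniformlyOn_iff.1 hconv
  obtain ⟨N1, hN1⟩ := eventually_atTop.1 (hconv' 1 one_pos)
  have hball : ∀ n ≥ N1, ∀ x ∈ Icc 0 T, ‖φn n x‖ ≤ M + 1 := by
    intro n hn x hx
    have h1 : dist (φ x) (φn n x) < 1 := hN1 n hn x hx
    have : ‖φn n x‖ ≤ ‖φ x‖ + dist (φ x) (φn n x) := by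
      rw [dist_comm, dist_eq_norm]
      calc ‖φn n x‖ = ‖φ x + (φn n x - φ x)‖ := by ring_nf
        _ ≤ ‖φ x‖ + ‖φn n x - φ x‖ := norm_add_le _ _
    linarith [hM x hx]
  -- the gap function and the interval where everything is strictly below g
  set f : ℝ → ℝ := fun s => g s i - φ s i with hf
  have hft : 0 < f t := sub_pos.2 hlt
  have hφat : ContinuousAt φ t := hφ_cont.continuousAt (Icc_mem_nhds ht.1 ht.2)
  have hfc : ContinuousAt f t :=
    ((hgc i).continuousAt).sub ((continuous_apply i).continuousAt.comp hφat)
  have hev : ∀ᶠ s in 𝓝 t, s ∈ Ioo 0 T ∧ f t / 2 < f s := by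
    filter_upwards [isOpen_Ioo.mem_nhds ht,
      hfc.eventually (eventually_gt_nhds (show f t / 2 < f t by linarith))] with s h1 h2
    exact ⟨h1, h2⟩
  obtain ⟨ε, hεpos, hε⟩ := Metric.eventually_nhds_iff.1 hev
  set δ : ℝ := ε / 2 with hδdef
  have hδpos : 0 < δ := by positivity
  have hδ : ∀ y, |y - t| ≤ δ → y ∈ Ioo 0 T ∧ f t / 2 < f y := by
    intro y hy
    exact hε (by rw [Real.dist_eq]; linarith)
  -- N2: for n ≥ N2 the φn are strictly below g on the δ-interval
  obtain ⟨N2, hN2⟩ := eventually_atTop.1 (hconv' (f t / 2) (by linarith))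
  have hsubI : Icc t (t + δ) ⊆ Icc 0 T := by
    intro y hy
    have : |y - t| ≤ δ := abs_le.2 ⟨by linarith [hy.1], by linarith [hy.2]⟩
    exact Ioo_subset_Icc_self (hδ y this).1
  have hlt' : ∀ n ≥ N2, ∀ y ∈ Icc t (t + δ), φn n y i < g y i := by
    intro n hn y hy
    have hyδ : |y - t| ≤ δ := abs_le.2 ⟨by linarith [hy.1], by linarith [hy.2]⟩
    have hyI : y ∈ Icc 0 T := hsubI hy
    have hd : dist (φ y) (φn n y) < f t / 2 := hN2 n hn y hyI
    have hdi : |φ y i - φn n y i| ≤ dist (φ y) (φn n y) := by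
      simpa [Real.dist_eq] using dist_le_pi_dist (φ y) (φn n y) i
    have h4 := abs_lt.1 (hdi.trans_lt hd)
    have h5 := (hδ y hyδ).2
    have hfy : f y = g y i - φ y i := rfl
    have hfty : f t = g t i - φ t i := rfl
    linarith [h4.1, h4.2]
  -- the key inequality for the limit φ
  have key : ∀ s ∈ Ioc t (t + δ), φ s i - φ t i ≤ -(∫ t' in t..s, H i t' (φ t')) := by
    intro s hs
    have hts : t ≤ s := hs.1.le
    have htmem : t ∈ Icc t (t + δ) := ⟨le_refl t, by linarith⟩
    have hsmem : s ∈ Icc t (t + δ) := ⟨hs.1.le, hs.2⟩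
    have hIsub : Set.uIoc t s ⊆ Icc 0 T := by
      rw [uIoc_of_le hts]
      exact fun y hy => hsubI ⟨hy.1.le, hy.2.trans hs.2⟩
    -- limit of the left side
    have hL : Tendsto (fun n => φn n s i - φn n t i) atTop (𝓝 (φ s i - φ t i)) := by
      have h1 : Tendsto (fun n => φn n s) atTop (𝓝 (φ s)) := hconv.tendsto_at (hsubI hsmem)
      have h2 : Tendsto (fun n => φn n t) atTop (𝓝 (φ t)) := hconv.tendsto_at htI
      exact (((continuous_apply i).continuousAt.tendsto.comp h1).sub
        ((continuous_apply i).continuousAt.tendsto.comp h2))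
    -- limit of the right side via dominated convergence
    have hR : Tendsto (fun n => ∫ t' in t..s, H i t' (φn n t')) atTop
        (𝓝 (∫ t' in t..s, H i t' (φ t'))) := by
      apply intervalIntegral.tendsto_integral_filter_of_dominated_convergence (fun _ => C)
      · filter_upwards [] with n
        have hcn : ContinuousOn (fun t' => H i t' (φn n t')) (Icc 0 T) :=
          (hHc i).comp_continuousOn (continuousOn_id.prodMk (hφn_cont n))
        exact ((hcn.mono hIsub).aestronglyMeasurable measurableSet_uIoc)
      · filter_upwards [eventually_ge_atTop N1] with n hn
        refine ae_of_all _ fun x hx => ?_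
        have hxI : x ∈ Icc 0 T := hIsub hx
        simpa [Real.norm_eq_abs] using hC x hxI (φn n x) (hball n hn x hxI)
      · exact intervalIntegrable_const
      · refine ae_of_all _ fun x hx => ?_
        have hxI : x ∈ Icc 0 T := hIsub hx
        have h1 : Tendsto (fun n => φn n x) atTop (𝓝 (φ x)) := hconv.tendsto_at hxI
        have h2 : Continuous fun w => H i x w :=
          (hHc i).comp (continuous_const.prodMk continuous_id)
        exact h2.continuousAt.tendsto.comp h1
    -- eventual inequality
    have hEv : ∀ᶠ n in atTop, φn n s i - φn n t i ≤ -(∫ t' in t..s, H i t' (φn n t')) := by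
      filter_upwards [eventually_ge_atTop N2] with n hn
      exact hineq n i t (t + δ) (by linarith) hsubI (hlt' n hn) t htmem s hsmem hts
    exact le_of_tendsto_of_tendsto hL hR.neg hEv
  -- the auxiliary function Φ and its derivative at t
  set Φ : ℝ → ℝ := fun s => φ s i - φ t i + ∫ t' in t..s, H i t' (φ t') with hΦ
  have hHcont : ContinuousOn (fun t' => H i t' (φ t')) (Ioo 0 T) :=
    (hHc i).comp_continuousOn (continuousOn_id.prodMk (hφ_cont.mono Ioo_subset_Icc_self))
  have hHat : ContinuousAt (fun t' => H i t' (φ t')) t :=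
    (hHc i).continuousAt.comp (continuousAt_id.prodMk hφat)
  have hInt : HasDerivAt (fun s => ∫ t' in t..s, H i t' (φ t')) (H i t (φ t)) t := by
    apply intervalIntegral.integral_hasDerivAt_right
    · simp [intervalIntegrable_iff]
    · exact ContinuousOn.stronglyMeasurableAtFilter isOpen_Ioo hHcont t ht
    · exact hHat
  have hΦ' : HasDerivAt Φ (D + H i t (φ t)) t := (hD.sub_const (φ t i)).add hInt
  have hΦt : Φ t = 0 := by simp [hΦ]
  -- slope argument on the right
  have hslope : Tendsto (slope Φ t) (𝓝[>] t) (𝓝 (D + H i t (φ t))) :=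
    (hasDerivAt_iff_tendsto_slope.1 hΦ').mono_left
      (nhdsWithin_mono t (fun y hy => ne_of_gt hy))
  have hle : ∀ᶠ y in 𝓝[>] t, slope Φ t y ≤ 0 := by
    have hmem : Ioc t (t + δ) ∈ 𝓝[>] t := Ioc_mem_nhdsGT_of_mem ⟨le_refl t, by linarith⟩
    filter_upwards [hmem] with y hy
    have hΦy : Φ y ≤ 0 := by
      have := key y hy
      simp only [hΦ]
      linarith
    rw [slope_def_field]
    rw [div_eq_mul_inv]
    apply mul_nonpos_of_nonpos_of_nonneg
    · rw [hΦt]; linarith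
    · exact inv_nonneg.2 (by linarith [hy.1])
  have hfinal : D + H i t (φ t) ≤ 0 := le_of_tendsto hslope hle
  linarith
end

section
/- Under assumptions (H1)-(H4) (U, V compact; Q_{i,j}, g(·,i), h(·,i,·,·) continuous; g Lipschitz in t; Isaacs condition min_u max_v = max_v min_u for the Hamiltonian), there exists at least one function φ ∈ AC satisfying the Zachrisson equation with unilateral constraints: (Z1) φ(T,i) = g(T,i); (Z2) φ(t,i) ≤ g(t,i); (Z3) dφ(t,i)/dt ≤ -H_i(t,φ(t)) at points of differentiability where φ(t,i) < g(t,i); (Z4) dφ(t,i)/dt ≥ -H_i(t,φ(t)) at all points of differentiability. -/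
open Set MeasureTheory

open Filter Topology Function

namespace Zach

lemma csInf_image_le_add {S : Set ℝ} (hS : IsCompact S) (hne : S.Nonempty)
    {F G : ℝ → ℝ} (hF : ContinuousOn F S) {c : ℝ}
    (hc : ∀ s ∈ S, F s ≤ G s + c) : sInf (F '' S) ≤ sInf (G '' S) + c := by
  have hFb : BddBelow (F '' S) := (hS.image_of_continuousOn hF).bddBelow
  have key : ∀ s ∈ S, sInf (F '' S) - c ≤ G s := by
    intro s hs
    have h1 : sInf (F '' S) ≤ F s := csInf_le hFb ⟨s, hs, rfl⟩
    linarith [hc s hs]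
  have h2 : sInf (F '' S) - c ≤ sInf (G '' S) :=
    le_csInf (hne.image G) (by rintro x ⟨s, hs, rfl⟩; exact key s hs)
  linarith

lemma abs_csInf_image_sub {S : Set ℝ} (hS : IsCompact S) (hne : S.Nonempty)
    {F G : ℝ → ℝ} (hF : ContinuousOn F S) (hG : ContinuousOn G S) {c : ℝ}
    (hc : ∀ s ∈ S, |F s - G s| ≤ c) : |sInf (F '' S) - sInf (G '' S)| ≤ c := by
  rw [abs_le]
  have h1 := csInf_image_le_add hS hne hF (G := G) (c := c)
    (fun s hs => by have := hc s hs; rw [abs_le] at this; linarith [this.1])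
  have h2 := csInf_image_le_add hS hne hG (G := F) (c := c)
    (fun s hs => by have := hc s hs; rw [abs_le] at this; linarith [this.2])
  constructor <;> linarith

lemma csInf_image_sub_const {B : Set ℝ} (hne : B.Nonempty) (hb : BddBelow B) (c : ℝ) :
    sInf ((fun x => x - c) '' B) = sInf B - c := by
  obtain ⟨lb, hlb⟩ := hb
  have hbi : BddBelow ((fun x => x - c) '' B) := by
    refine ⟨lb - c, ?_⟩
    rintro x ⟨b, hbB, rfl⟩
    have := hlb hbB
    simp only [mem_setOf_eq] at this ⊢
    linarith
  apply le_antisymm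
  · have key : ∀ b ∈ B, sInf ((fun x => x - c) '' B) + c ≤ b := by
      intro b hbB
      have := csInf_le hbi ⟨b, hbB, rfl⟩
      simp only at this
      linarith
    have := le_csInf hne key
    linarith
  · refine le_csInf (hne.image _) ?_
    rintro x ⟨b, hbB, rfl⟩
    have : sInf B ≤ b := csInf_le ⟨lb, hlb⟩ hbB
    simp only
    linarith

lemma ciInf_le_ciInf_add {ι : Sort*} [Nonempty ι] {f g : ι → ℝ} {c : ℝ}
    (hf : BddBelow (range f)) (h : ∀ u, f u ≤ g u + c) : (⨅ u, f u) ≤ (⨅ u, g u) + c := by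
  have key : ∀ u, (⨅ u, f u) - c ≤ g u := fun u => by
    have := ciInf_le hf u; linarith [h u]
  have := le_ciInf key; linarith

lemma ciSup_le_ciSup_add {ι : Sort*} [Nonempty ι] {f g : ι → ℝ} {c : ℝ}
    (hg : BddAbove (range g)) (h : ∀ u, f u ≤ g u + c) : (⨆ u, f u) ≤ (⨆ u, g u) + c := by
  refine ciSup_le fun u => ?_
  have := le_ciSup hg u
  linarith [h u]

lemma abs_ciInf_sub {ι : Sort*} [Nonempty ι] {f g : ι → ℝ} {c : ℝ}
    (hf : BddBelow (range f)) (hg : BddBelow (range g)) (h : ∀ u, |f u - g u| ≤ c) :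
    |(⨅ u, f u) - (⨅ u, g u)| ≤ c := by
  rw [abs_le]
  have h1 := ciInf_le_ciInf_add hf (g := g) (c := c)
    (fun u => by have := h u; rw [abs_le] at this; linarith [this.1])
  have h2 := ciInf_le_ciInf_add hg (g := f) (c := c)
    (fun u => by have := h u; rw [abs_le] at this; linarith [this.2])
  constructor <;> linarith

lemma abs_ciSup_sub {ι : Sort*} [Nonempty ι] {f g : ι → ℝ} {c : ℝ}
    (hf : BddAbove (range f)) (hg : BddAbove (range g)) (h : ∀ u, |f u - g u| ≤ c) :
    |(⨆ u, f u) - (⨆ u, g u)| ≤ c := by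
  rw [abs_le]
  have h1 := ciSup_le_ciSup_add hg (f := f) (c := c)
    (fun u => by have := h u; rw [abs_le] at this; linarith [this.1])
  have h2 := ciSup_le_ciSup_add hf (f := g) (c := c)
    (fun u => by have := h u; rw [abs_le] at this; linarith [this.2])
  constructor <;> linarith

lemma abs_infSup_sub {U V : Type*} [TopologicalSpace U] [TopologicalSpace V]
    [CompactSpace U] [CompactSpace V] [Nonempty U] [Nonempty V]
    {F1 F2 : U × V → ℝ} (h1 : Continuous F1) (h2 : Continuous F2) {c : ℝ}
    (hc : ∀ p, |F1 p - F2 p| ≤ c) :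
    |(⨅ u : U, ⨆ v : V, F1 (u, v)) - (⨅ u : U, ⨆ v : V, F2 (u, v))| ≤ c := by
  have bA1 : ∀ u : U, BddAbove (range fun v => F1 (u, v)) := fun u =>
    (isCompact_range (h1.comp (continuous_const.prodMk continuous_id))).bddAbove
  have bA2 : ∀ u : U, BddAbove (range fun v => F2 (u, v)) := fun u =>
    (isCompact_range (h2.comp (continuous_const.prodMk continuous_id))).bddAbove
  obtain ⟨lb1, hlb1⟩ := (isCompact_range h1).bddBelow
  obtain ⟨lb2, hlb2⟩ := (isCompact_range h2).bddBelow
  have bB1 : BddBelow (range fun u : U => ⨆ v : V, F1 (u, v)) := by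
    refine ⟨lb1, ?_⟩
    rintro x ⟨u, rfl⟩
    exact le_trans (hlb1 ⟨(u, Classical.arbitrary V), rfl⟩) (le_ciSup (bA1 u) _)
  have bB2 : BddBelow (range fun u : U => ⨆ v : V, F2 (u, v)) := by
    refine ⟨lb2, ?_⟩
    rintro x ⟨u, rfl⟩
    exact le_trans (hlb2 ⟨(u, Classical.arbitrary V), rfl⟩) (le_ciSup (bA2 u) _)
  exact abs_ciInf_sub bB1 bB2 fun u => abs_ciSup_sub (bA1 u) (bA2 u) fun v => hc (u, v)




section runMin
variable {T : ℝ} {G : ℝ → ℝ} {t t₁ t₂ s : ℝ}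

lemma runMin_bddBelow (hG : ContinuousOn G (Icc 0 T)) (ht : t ∈ Icc 0 T) :
    BddBelow (G '' Icc t T) :=
  ((isCompact_Icc).image_of_continuousOn (hG.mono (Icc_subset_Icc_left ht.1))).bddBelow

lemma runMin_nonempty (ht : t ∈ Icc 0 T) : (G '' Icc t T).Nonempty :=
  ⟨G T, T, ⟨ht.2, le_rfl⟩, rfl⟩

lemma runMin_le (hG : ContinuousOn G (Icc 0 T)) (ht : t ∈ Icc 0 T) (hs : s ∈ Icc t T) :
    sInf (G '' Icc t T) ≤ G s :=
  csInf_le (runMin_bddBelow hG ht) ⟨s, hs, rfl⟩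

lemma runMin_mono (hG : ContinuousOn G (Icc 0 T)) (ht₁ : t₁ ∈ Icc 0 T) (h12 : t₁ ≤ t₂)
    (ht₂ : t₂ ∈ Icc 0 T) : sInf (G '' Icc t₁ T) ≤ sInf (G '' Icc t₂ T) :=
  csInf_le_csInf (runMin_bddBelow hG ht₁) (runMin_nonempty ht₂)
    (image_mono (Icc_subset_Icc_left h12))

lemma runMin_attained (hG : ContinuousOn G (Icc 0 T)) (ht : t ∈ Icc 0 T) :
    ∃ σ ∈ Icc t T, sInf (G '' Icc t T) = G σ := by
  obtain ⟨σ, hσ, hmin⟩ := isCompact_Icc.exists_isMinOn (nonempty_Icc.2 ht.2)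
    (hG.mono (Icc_subset_Icc_left ht.1))
  exact ⟨σ, hσ, IsLeast.csInf_eq ⟨⟨σ, hσ, rfl⟩, by rintro x ⟨s', hs', rfl⟩; exact hmin hs'⟩⟩

lemma runMin_lip (hG : ContinuousOn G (Icc 0 T)) {L : ℝ} (hL : 0 ≤ L)
    (hGlip : ∀ s₁ ∈ Icc 0 T, ∀ s₂ ∈ Icc 0 T, |G s₁ - G s₂| ≤ L * |s₁ - s₂|)
    (ht₁ : t₁ ∈ Icc 0 T) (h12 : t₁ ≤ t₂) (ht₂ : t₂ ∈ Icc 0 T) :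
    sInf (G '' Icc t₂ T) - sInf (G '' Icc t₁ T) ≤ L * (t₂ - t₁) := by
  obtain ⟨σ₁, hσ₁, heq₁⟩ := runMin_attained hG ht₁
  have hσ₁' : σ₁ ∈ Icc 0 T := ⟨le_trans ht₁.1 hσ₁.1, hσ₁.2⟩
  have hσ₂ : max σ₁ t₂ ∈ Icc t₂ T := ⟨le_max_right _ _, max_le hσ₁.2 ht₂.2⟩
  have h2 : sInf (G '' Icc t₂ T) ≤ G (max σ₁ t₂) := runMin_le hG ht₂ hσ₂
  have h3 : |G (max σ₁ t₂) - G σ₁| ≤ L * |max σ₁ t₂ - σ₁| :=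
    hGlip _ ⟨le_trans ht₂.1 hσ₂.1, hσ₂.2⟩ _ hσ₁'
  have h4 : |max σ₁ t₂ - σ₁| ≤ t₂ - t₁ := by
    rcases le_total t₂ σ₁ with hc | hc
    · rw [max_eq_left hc]; simp; linarith
    · rw [max_eq_right hc, abs_of_nonneg (by linarith)]; linarith [hσ₁.1]
  have h5 : L * |max σ₁ t₂ - σ₁| ≤ L * (t₂ - t₁) := mul_le_mul_of_nonneg_left h4 hL
  have h6 := (abs_le.1 h3).2
  linarith

end runMin

lemma monotone_lipschitz_repr (T : ℝ) {m : ℝ → ℝ} {L : ℝ} (hL : 0 ≤ L) (hm : Monotone m)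
    (hlip : ∀ a b : ℝ, a ≤ b → m b - m a ≤ L * (b - a)) :
    ∃ ρ : ℝ → ℝ, IntegrableOn ρ (Icc 0 T) ∧ ∀ t, 0 ≤ t → m t = m 0 + ∫ s in (0:ℝ)..t, ρ s := by
  have hcont : Continuous m := by
    have hlw : LipschitzWith (Real.toNNReal L) m := by
      refine LipschitzWith.of_dist_le_mul fun x y => ?_
      rw [Real.dist_eq, Real.dist_eq, Real.coe_toNNReal L hL]
      rcases le_total x y with hxy | hxy
      · rw [abs_of_nonpos (by linarith [hm hxy] : m x - m y ≤ 0),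
          abs_of_nonpos (by linarith : x - y ≤ 0)]
        have := hlip x y hxy; linarith
      · rw [abs_of_nonneg (by linarith [hm hxy] : 0 ≤ m x - m y),
          abs_of_nonneg (by linarith : 0 ≤ x - y)]
        have := hlip y x hxy; linarith
    exact hlw.continuous
  set S : StieltjesFunction ℝ :=
    ⟨m, hm, fun x => hcont.continuousAt.continuousWithinAt⟩ with hS
  have hScoe : ∀ x, S x = m x := fun x => rfl
  set W : StieltjesFunction ℝ :=
    ⟨fun x => L * x - m x,
     fun a b hab => by have := hlip a b hab; simp only; linarith,
     fun x => ((continuous_const.mul continuous_id).sub hcont).continuousAt.continuousWithinAt⟩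
     with hW
  have hWcoe : ∀ x, W x = L * x - m x := fun x => rfl
  haveI : IsLocallyFiniteMeasure (S.measure + W.measure) := by
    constructor; intro x
    obtain ⟨s₁, hs₁, hf₁⟩ := S.measure.finiteAt_nhds x
    obtain ⟨s₂, hs₂, hf₂⟩ := W.measure.finiteAt_nhds x
    refine ⟨s₁ ∩ s₂, inter_mem hs₁ hs₂, ?_⟩
    rw [Measure.add_apply]
    exact ENNReal.add_lt_top.2 ⟨lt_of_le_of_lt (measure_mono inter_subset_left) hf₁,
      lt_of_le_of_lt (measure_mono inter_subset_right) hf₂⟩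
  have hsum : S.measure + W.measure = (ENNReal.ofReal L) • volume := by
    refine Measure.ext_of_Ioc _ _ fun a b hab => ?_
    rw [Measure.add_apply, S.measure_Ioc, W.measure_Ioc, Measure.smul_apply, Real.volume_Ioc,
      smul_eq_mul, ← ENNReal.ofReal_mul hL, hScoe, hScoe, hWcoe, hWcoe,
      ← ENNReal.ofReal_add (by linarith [hm hab.le] : (0:ℝ) ≤ m b - m a)
        (by have := hlip a b hab.le; linarith : (0:ℝ) ≤ L * b - m b - (L * a - m a))]
    congr 1; ring
  have hle : S.measure ≤ (ENNReal.ofReal L) • volume := by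
    rw [← hsum]; exact Measure.le_add_right le_rfl
  have hac : S.measure ≪ volume := by
    refine Measure.AbsolutelyContinuous.mk fun s hs h0 => ?_
    have h1 := Measure.le_iff'.1 hle s
    rw [Measure.smul_apply, h0, smul_eq_mul, mul_zero] at h1
    exact le_antisymm h1 zero_le
  have hwd : volume.withDensity (S.measure.rnDeriv volume) = S.measure :=
    Measure.withDensity_rnDeriv_eq _ _ hac
  have hint : ∀ s : Set ℝ, MeasurableSet s →
      ∫⁻ x in s, S.measure.rnDeriv volume x = S.measure s := fun s hs => by
    conv_rhs => rw [← hwd]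
    rw [withDensity_apply _ hs]
  refine ⟨fun x => (S.measure.rnDeriv volume x).toReal, ?_, ?_⟩
  · refine integrable_toReal_of_lintegral_ne_top
      ((Measure.measurable_rnDeriv _ _).aemeasurable) ?_
    rw [hint _ measurableSet_Icc]
    exact (IsCompact.measure_lt_top isCompact_Icc).ne
  · intro t ht
    have h1 : ∫ s in (0:ℝ)..t, (S.measure.rnDeriv volume s).toReal
        = ∫ x in Ioc 0 t, (S.measure.rnDeriv volume x).toReal := intervalIntegral.integral_of_le ht
    have h2 : ∫ x in Ioc 0 t, (S.measure.rnDeriv volume x).toReal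
        = (∫⁻ x in Ioc 0 t, S.measure.rnDeriv volume x).toReal :=
      integral_toReal ((Measure.measurable_rnDeriv _ _).aemeasurable)
        (ae_restrict_of_ae (Measure.rnDeriv_lt_top _ _))
    rw [h1, h2, hint _ measurableSet_Ioc, S.measure_Ioc, hScoe, hScoe,
      ENNReal.toReal_ofReal (by linarith [hm ht] : (0:ℝ) ≤ m t - m 0)]
    ring


section ham
variable {d : ℕ} {U V : Type*} [MetricSpace U] [CompactSpace U] [Nonempty U]
    [MetricSpace V] [CompactSpace V] [Nonempty V]
    (Q : ℝ → U → V → Fin d → Fin d → ℝ) (h : ℝ → Fin d → U → V → ℝ)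

lemma ham_cont (hQc : ∀ i j, Continuous fun p : ℝ × U × V => Q p.1 p.2.1 p.2.2 i j)
    (hhc : ∀ i, Continuous fun p : ℝ × U × V => h p.1 i p.2.1 p.2.2) (i : Fin d) :
    Continuous fun p : ℝ × (Fin d → ℝ) =>
      ⨅ u : U, ⨆ v : V, (∑ j, Q p.1 u v i j * p.2 j + h p.1 i u v) := by
  have hproj : Continuous fun q : (ℝ × (Fin d → ℝ)) × U × V => (q.1.1, q.2.1, q.2.2) := by fun_prop
  have hFc : Continuous fun q : (ℝ × (Fin d → ℝ)) × (U × V) =>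
      (∑ j, Q q.1.1 q.2.1 q.2.2 i j * q.1.2 j + h q.1.1 i q.2.1 q.2.2) := by
    refine Continuous.add ?_ ((hhc i).comp hproj)
    exact continuous_finset_sum _ fun j _ => Continuous.mul ((hQc i j).comp hproj)
      ((continuous_apply j).comp (continuous_snd.comp continuous_fst))
  set Fc : C((ℝ × (Fin d → ℝ)) × (U × V), ℝ) := ⟨_, hFc⟩ with hFcdef
  have hlip : LipschitzWith 1 fun G : C(U × V, ℝ) => ⨅ u : U, ⨆ v : V, G (u, v) := by
    refine LipschitzWith.of_dist_le_mul fun G1 G2 => ?_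
    rw [Real.dist_eq, NNReal.coe_one, one_mul]
    exact abs_infSup_sub (map_continuous G1) (map_continuous G2)
      fun p => by rw [← Real.dist_eq]; exact ContinuousMap.dist_apply_le_dist p
  exact hlip.continuous.comp (map_continuous Fc.curry)

lemma ham_lipK {T : ℝ} (hT : 0 ≤ T)
    (hQc : ∀ i j, Continuous fun p : ℝ × U × V => Q p.1 p.2.1 p.2.2 i j)
    (hhc : ∀ i, Continuous fun p : ℝ × U × V => h p.1 i p.2.1 p.2.2) :
    ∃ K : ℝ, 0 ≤ K ∧ ∀ t ∈ Icc (0:ℝ) T, ∀ (w w' : Fin d → ℝ) (i : Fin d),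
      |(⨅ u : U, ⨆ v : V, (∑ j, Q t u v i j * w j + h t i u v)) -
       (⨅ u : U, ⨆ v : V, (∑ j, Q t u v i j * w' j + h t i u v))| ≤ K * dist w w' := by
  set SQ : ℝ × U × V → ℝ := fun p => ∑ i, ∑ j, |Q p.1 p.2.1 p.2.2 i j| with hSQ
  have hSQc : ContinuousOn SQ ((Icc 0 T) ×ˢ (univ : Set (U × V))) := by
    apply Continuous.continuousOn
    exact continuous_finset_sum _ fun i _ => continuous_finset_sum _ fun j _ => (hQc i j).abs
  have hcs : IsCompact ((Icc (0:ℝ) T) ×ˢ (univ : Set (U × V))) := isCompact_Icc.prod isCompact_univ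
  have hne : ((Icc (0:ℝ) T) ×ˢ (univ : Set (U × V))).Nonempty :=
    ⟨⟨0, Classical.arbitrary U, Classical.arbitrary V⟩, ⟨le_rfl, hT⟩, mem_univ _⟩
  obtain ⟨p₀, _, hmax⟩ := hcs.exists_isMaxOn hne hSQc
  refine ⟨max (SQ p₀) 0, le_max_right _ _, ?_⟩
  intro t ht w w' i
  have hpt : ∀ p : U × V,
      |(∑ j, Q t p.1 p.2 i j * w j + h t i p.1 p.2) - (∑ j, Q t p.1 p.2 i j * w' j + h t i p.1 p.2)|
      ≤ (max (SQ p₀) 0) * dist w w' := by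
    rintro ⟨u, v⟩
    have h1 : (∑ j, Q t u v i j * w j + h t i u v) - (∑ j, Q t u v i j * w' j + h t i u v)
        = ∑ j, Q t u v i j * (w j - w' j) := by
      rw [add_sub_add_right_eq_sub, ← Finset.sum_sub_distrib]
      exact Finset.sum_congr rfl fun j _ => (mul_sub _ _ _).symm
    rw [h1]
    calc |∑ j, Q t u v i j * (w j - w' j)| ≤ ∑ j, |Q t u v i j * (w j - w' j)| :=
          Finset.abs_sum_le_sum_abs _ _
      _ ≤ ∑ j, |Q t u v i j| * dist w w' := by
          refine Finset.sum_le_sum fun j _ => ?_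
          rw [abs_mul]
          refine mul_le_mul_of_nonneg_left ?_ (abs_nonneg _)
          rw [← Real.dist_eq]
          exact dist_le_pi_dist w w' j
      _ = (∑ j, |Q t u v i j|) * dist w w' := (Finset.sum_mul _ _ _).symm
      _ ≤ (max (SQ p₀) 0) * dist w w' := by
          refine mul_le_mul_of_nonneg_right ?_ dist_nonneg
          refine le_trans ?_ (le_max_left _ _)
          refine le_trans ?_ (hmax (⟨ht, mem_univ (⟨u, v⟩ : U × V)⟩ :
            (t, u, v) ∈ (Icc (0:ℝ) T) ×ˢ (univ : Set (U × V))))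
          exact Finset.single_le_sum (f := fun i' => ∑ j, |Q t u v i' j|)
            (fun i' _ => Finset.sum_nonneg fun j _ => abs_nonneg _) (Finset.mem_univ i)
  have hc1 : Continuous fun p : U × V => ∑ j, Q t p.1 p.2 i j * w j + h t i p.1 p.2 := by
    have hp2 : Continuous fun p : U × V => ((t, p.1, p.2) : ℝ × U × V) := by fun_prop
    exact Continuous.add (continuous_finset_sum _ fun j _ =>
      ((hQc i j).comp hp2).mul continuous_const) ((hhc i).comp hp2)
  have hc2 : Continuous fun p : U × V => ∑ j, Q t p.1 p.2 i j * w' j + h t i p.1 p.2 := by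
    have hp2 : Continuous fun p : U × V => ((t, p.1, p.2) : ℝ × U × V) := by fun_prop
    exact Continuous.add (continuous_finset_sum _ fun j _ =>
      ((hQc i j).comp hp2).mul continuous_const) ((hhc i).comp hp2)
  exact abs_infSup_sub hc1 hc2 hpt

end ham

theorem core {d : ℕ} {T Lg K : ℝ} (hT : 0 < T) (hLg : 0 ≤ Lg) (hK : 0 ≤ K)
    (g : ℝ → Fin d → ℝ) (hgc : ∀ i, Continuous fun t => g t i)
    (hglip : ∀ i, ∀ s r : ℝ, |g s i - g r i| ≤ Lg * |s - r|)
    (Hf : ℝ → (Fin d → ℝ) → Fin d → ℝ)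
    (hHc : Continuous fun p : ℝ × (Fin d → ℝ) => Hf p.1 p.2)
    (hHlip : ∀ t ∈ Icc (0:ℝ) T, ∀ (w w' : Fin d → ℝ) (i : Fin d),
       |Hf t w i - Hf t w' i| ≤ K * dist w w') :
    ∃ φ : ℝ → Fin d → ℝ,
      (∀ i, IsAC T (fun t => φ t i)) ∧
      (∀ i, φ T i = g T i) ∧
      (∀ t ∈ Icc (0:ℝ) T, ∀ i, φ t i ≤ g t i) ∧
      (∀ t ∈ Icc (0:ℝ) T, ∀ i, ∀ D : ℝ, HasDerivAt (fun s => φ s i) D t →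
        φ t i < g t i → D ≤ -(Hf t (φ t) i)) ∧
      (∀ t ∈ Icc (0:ℝ) T, ∀ i, ∀ D : ℝ, HasDerivAt (fun s => φ s i) D t →
        -(Hf t (φ t) i) ≤ D) := by
  -- the space
  have hmem0 : (0:ℝ) ∈ Icc (0:ℝ) T := ⟨le_rfl, hT.le⟩
  have hmemT : T ∈ Icc (0:ℝ) T := ⟨hT.le, le_rfl⟩
  -- extension of elements of X to ℝ
  have he_cont : ∀ ψ : C(Icc (0:ℝ) T, Fin d → ℝ), Continuous fun r : ℝ => ψ (projIcc 0 T hT.le r) :=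
    fun ψ => ψ.continuous.comp continuous_projIcc
  -- f of ψ, continuity and integrability
  have hfψc : ∀ (ψ : C(Icc (0:ℝ) T, Fin d → ℝ)) (i : Fin d),
      Continuous fun r => Hf r (ψ (projIcc 0 T hT.le r)) i := fun ψ i =>
    (continuous_apply i).comp (hHc.comp (continuous_id.prodMk (he_cont ψ)))
  have hfψint : ∀ (ψ : C(Icc (0:ℝ) T, Fin d → ℝ)) (i : Fin d) (a b : ℝ),
      IntervalIntegrable (fun r => Hf r (ψ (projIcc 0 T hT.le r)) i) volume a b :=
    fun ψ i a b => (hfψc ψ i).intervalIntegrable a b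
  -- uniform bound on fψ over [0,T]
  have hCψ : ∀ ψ : C(Icc (0:ℝ) T, Fin d → ℝ), ∃ C, 0 ≤ C ∧
      ∀ r ∈ Icc (0:ℝ) T, ∀ i, |Hf r (ψ (projIcc 0 T hT.le r)) i| ≤ C := by
    intro ψ
    have hcn : ContinuousOn (fun r => ‖Hf r (ψ (projIcc 0 T hT.le r))‖) (Icc 0 T) :=
      ((hHc.comp (continuous_id.prodMk (he_cont ψ))).norm).continuousOn
    obtain ⟨r₀, _, hmax⟩ := isCompact_Icc.exists_isMaxOn (nonempty_Icc.2 hT.le) hcn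
    refine ⟨‖Hf r₀ (ψ (projIcc 0 T hT.le r₀))‖, norm_nonneg _, fun r hr i => ?_⟩
    calc |Hf r (ψ (projIcc 0 T hT.le r)) i| ≤ ‖Hf r (ψ (projIcc 0 T hT.le r))‖ := by
          rw [← Real.norm_eq_abs]; exact norm_le_pi_norm _ i
      _ ≤ _ := hmax hr
  -- continuity of s ↦ g s i + ∫ r in a..s, fψ r i
  have hGtc : ∀ (ψ : C(Icc (0:ℝ) T, Fin d → ℝ)) (i : Fin d) (a : ℝ),
      Continuous fun s => g s i + ∫ r in a..s, Hf r (ψ (projIcc 0 T hT.le r)) i := fun ψ i a =>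
    (hgc i).add (intervalIntegral.continuous_primitive (fun a' b' => hfψint ψ i a' b') a)
  -- Lipschitz bound for G on [0,T]
  have hGlip : ∀ ψ : C(Icc (0:ℝ) T, Fin d → ℝ), ∃ L, 0 ≤ L ∧ ∀ i : Fin d,
      ∀ s₁ ∈ Icc (0:ℝ) T, ∀ s₂ ∈ Icc (0:ℝ) T,
      |(g s₁ i + ∫ r in (0:ℝ)..s₁, Hf r (ψ (projIcc 0 T hT.le r)) i) -
       (g s₂ i + ∫ r in (0:ℝ)..s₂, Hf r (ψ (projIcc 0 T hT.le r)) i)| ≤ L * |s₁ - s₂| := by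
    intro ψ
    obtain ⟨C, hC0, hC⟩ := hCψ ψ
    refine ⟨Lg + C, by linarith, fun i s₁ hs₁ s₂ hs₂ => ?_⟩
    have h1 : (∫ r in (0:ℝ)..s₁, Hf r (ψ (projIcc 0 T hT.le r)) i) -
        (∫ r in (0:ℝ)..s₂, Hf r (ψ (projIcc 0 T hT.le r)) i)
        = ∫ r in s₂..s₁, Hf r (ψ (projIcc 0 T hT.le r)) i :=
      intervalIntegral.integral_interval_sub_left (hfψint ψ i 0 s₁) (hfψint ψ i 0 s₂)
    have h2 : |∫ r in s₂..s₁, Hf r (ψ (projIcc 0 T hT.le r)) i| ≤ C * |s₁ - s₂| := by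
      have := intervalIntegral.norm_integral_le_of_norm_le_const (C := C)
        (f := fun r => Hf r (ψ (projIcc 0 T hT.le r)) i) (a := s₂) (b := s₁) ?_
      · rwa [Real.norm_eq_abs] at this
      · intro x hx
        rw [Real.norm_eq_abs]
        refine hC x ?_ i
        rcases le_total s₂ s₁ with hc | hc
        · rw [uIoc_of_le hc] at hx; exact ⟨le_trans hs₂.1 hx.1.le, le_trans hx.2 hs₁.2⟩
        · rw [uIoc_of_ge hc] at hx; exact ⟨le_trans hs₁.1 hx.1.le, le_trans hx.2 hs₂.2⟩
    calc |_| ≤ |g s₁ i - g s₂ i| + |(∫ r in (0:ℝ)..s₁, Hf r (ψ (projIcc 0 T hT.le r)) i) -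
        (∫ r in (0:ℝ)..s₂, Hf r (ψ (projIcc 0 T hT.le r)) i)| := by
          rw [show (g s₁ i + ∫ r in (0:ℝ)..s₁, Hf r (ψ (projIcc 0 T hT.le r)) i) -
            (g s₂ i + ∫ r in (0:ℝ)..s₂, Hf r (ψ (projIcc 0 T hT.le r)) i)
            = (g s₁ i - g s₂ i) + ((∫ r in (0:ℝ)..s₁, Hf r (ψ (projIcc 0 T hT.le r)) i) -
              (∫ r in (0:ℝ)..s₂, Hf r (ψ (projIcc 0 T hT.le r)) i)) by ring]
          exact abs_add_le _ _
      _ ≤ Lg * |s₁ - s₂| + C * |s₁ - s₂| := by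
          rw [h1]
          exact add_le_add (hglip i s₁ s₂) h2
      _ = (Lg + C) * |s₁ - s₂| := by ring

  -- the operator
  have hΘcont : ∀ ψ : C(Icc (0:ℝ) T, Fin d → ℝ), Continuous fun t : Icc (0:ℝ) T => fun i =>
      sInf ((fun s => g s i + ∫ r in (0:ℝ)..s, Hf r (ψ (projIcc 0 T hT.le r)) i) '' Icc (↑t) T)
      - ∫ r in (0:ℝ)..(↑t:ℝ), Hf r (ψ (projIcc 0 T hT.le r)) i := by
    intro ψ
    obtain ⟨L, hL0, hLip⟩ := hGlip ψ
    refine continuous_pi fun i => Continuous.sub ?_ ?_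
    · have hM : ∀ t₁ ∈ Icc (0:ℝ) T, ∀ t₂ ∈ Icc (0:ℝ) T,
          dist (sInf ((fun s => g s i + ∫ r in (0:ℝ)..s, Hf r (ψ (projIcc 0 T hT.le r)) i) '' Icc t₁ T))
               (sInf ((fun s => g s i + ∫ r in (0:ℝ)..s, Hf r (ψ (projIcc 0 T hT.le r)) i) '' Icc t₂ T))
            ≤ L * dist t₁ t₂ := by
        intro t₁ h₁ t₂ h₂
        rw [Real.dist_eq, Real.dist_eq]
        rcases le_total t₁ t₂ with hc | hc
        · have hmono := runMin_mono ((hGtc ψ i 0).continuousOn) h₁ hc h₂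
          have hlip2 := runMin_lip ((hGtc ψ i 0).continuousOn) hL0
            (fun s₁ a s₂ b => hLip i s₁ a s₂ b) h₁ hc h₂
          rw [abs_of_nonpos (by linarith), abs_of_nonpos (by linarith)]
          linarith
        · have hmono := runMin_mono ((hGtc ψ i 0).continuousOn) h₂ hc h₁
          have hlip2 := runMin_lip ((hGtc ψ i 0).continuousOn) hL0
            (fun s₁ a s₂ b => hLip i s₁ a s₂ b) h₂ hc h₁
          rw [abs_of_nonneg (by linarith), abs_of_nonneg (by linarith)]
          linarith
      have hlow : LipschitzOnWith (Real.toNNReal L)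
          (fun τ => sInf ((fun s => g s i + ∫ r in (0:ℝ)..s, Hf r (ψ (projIcc 0 T hT.le r)) i) '' Icc τ T))
          (Icc (0:ℝ) T) := by
        refine LipschitzOnWith.of_dist_le_mul fun x hx y hy => ?_
        rw [Real.coe_toNNReal L hL0]
        exact hM x hx y hy
      exact hlow.continuousOn.comp_continuous continuous_subtype_val fun t => t.2
    · exact (intervalIntegral.continuous_primitive (fun a b => hfψint ψ i a b) 0).comp
        continuous_subtype_val
  set Θ : C(Icc (0:ℝ) T, Fin d → ℝ) → C(Icc (0:ℝ) T, Fin d → ℝ) := fun ψ =>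
    ⟨fun t => fun i =>
      sInf ((fun s => g s i + ∫ r in (0:ℝ)..s, Hf r (ψ (projIcc 0 T hT.le r)) i) '' Icc (↑t) T)
      - ∫ r in (0:ℝ)..(↑t:ℝ), Hf r (ψ (projIcc 0 T hT.le r)) i, hΘcont ψ⟩ with hΘdef
  -- translated form of the operator
  have key_eq : ∀ (ψ : C(Icc (0:ℝ) T, Fin d → ℝ)) (t : Icc (0:ℝ) T) (i : Fin d),
      Θ ψ t i = sInf ((fun s => g s i + ∫ r in (↑t:ℝ)..s, Hf r (ψ (projIcc 0 T hT.le r)) i)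
        '' Icc (↑t:ℝ) T) := by
    intro ψ t i
    have himg : (fun s => g s i + ∫ r in (↑t:ℝ)..s, Hf r (ψ (projIcc 0 T hT.le r)) i) '' Icc (↑t:ℝ) T
        = (fun x => x - ∫ r in (0:ℝ)..(↑t:ℝ), Hf r (ψ (projIcc 0 T hT.le r)) i) ''
          ((fun s => g s i + ∫ r in (0:ℝ)..s, Hf r (ψ (projIcc 0 T hT.le r)) i) '' Icc (↑t:ℝ) T) := by
      rw [Set.image_image]
      refine Set.image_congr fun s _ => ?_
      have h3 : (∫ r in (0:ℝ)..s, Hf r (ψ (projIcc 0 T hT.le r)) i) -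
          (∫ r in (0:ℝ)..(↑t:ℝ), Hf r (ψ (projIcc 0 T hT.le r)) i)
          = ∫ r in (↑t:ℝ)..s, Hf r (ψ (projIcc 0 T hT.le r)) i :=
        intervalIntegral.integral_interval_sub_left (hfψint ψ i 0 s) (hfψint ψ i 0 _)
      show g s i + (∫ r in (↑t:ℝ)..s, Hf r (ψ (projIcc 0 T hT.le r)) i)
        = (g s i + ∫ r in (0:ℝ)..s, Hf r (ψ (projIcc 0 T hT.le r)) i) -
          ∫ r in (0:ℝ)..(↑t:ℝ), Hf r (ψ (projIcc 0 T hT.le r)) i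
      linarith
    rw [himg, csInf_image_sub_const (runMin_nonempty t.2)
      (runMin_bddBelow ((hGtc ψ i 0).continuousOn) t.2)]
    rfl

  -- contraction estimate
  have contract : ∀ (n : ℕ) (ψ₁ ψ₂ : C(Icc (0:ℝ) T, Fin d → ℝ)) (t : Icc (0:ℝ) T),
      dist ((Θ^[n] ψ₁) t) ((Θ^[n] ψ₂) t)
        ≤ K ^ n * (T - ↑t) ^ n / (n.factorial : ℝ) * dist ψ₁ ψ₂ := by
    intro n
    induction n with
    | zero => intro ψ₁ ψ₂ t; simpa using ContinuousMap.dist_apply_le_dist t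
    | succ n ih =>
      intro ψ₁ ψ₂ t
      rw [Function.iterate_succ_apply', Function.iterate_succ_apply']
      have htt : (0:ℝ) ≤ T - ↑t := sub_nonneg.2 t.2.2
      have hδ : (0:ℝ) ≤ dist ψ₁ ψ₂ := dist_nonneg
      have hbound : 0 ≤ K ^ (n+1) * (T - ↑t) ^ (n+1) / ((n+1).factorial : ℝ) * dist ψ₁ ψ₂ := by
        positivity
      rw [dist_pi_le_iff hbound]
      intro i
      rw [Real.dist_eq, key_eq, key_eq]
      set c : ℝ := K ^ (n+1) * dist ψ₁ ψ₂ / (n.factorial : ℝ) with hc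
      have hc0 : 0 ≤ c := by positivity
      have hptw : ∀ s ∈ Icc (↑t:ℝ) T,
          |(g s i + ∫ r in (↑t:ℝ)..s, Hf r ((Θ^[n] ψ₁) (projIcc 0 T hT.le r)) i) -
           (g s i + ∫ r in (↑t:ℝ)..s, Hf r ((Θ^[n] ψ₂) (projIcc 0 T hT.le r)) i)|
          ≤ c * ((T - ↑t) ^ (n+1) / ((n:ℝ)+1)) := by
        intro s hs
        rw [add_sub_add_left_eq_sub,
          ← intervalIntegral.integral_sub (hfψint _ i _ s) (hfψint _ i _ s)]
        have hmono1 : |∫ r in (↑t:ℝ)..s, (Hf r ((Θ^[n] ψ₁) (projIcc 0 T hT.le r)) i -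
            Hf r ((Θ^[n] ψ₂) (projIcc 0 T hT.le r)) i)|
            ≤ ∫ r in (↑t:ℝ)..s, |Hf r ((Θ^[n] ψ₁) (projIcc 0 T hT.le r)) i -
              Hf r ((Θ^[n] ψ₂) (projIcc 0 T hT.le r)) i| :=
          intervalIntegral.abs_integral_le_integral_abs hs.1
        have habs_int : IntervalIntegrable (fun r => |Hf r ((Θ^[n] ψ₁) (projIcc 0 T hT.le r)) i -
            Hf r ((Θ^[n] ψ₂) (projIcc 0 T hT.le r)) i|) volume (↑t) s :=
          (((hfψc _ i).sub (hfψc _ i)).abs).intervalIntegrable _ _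
        have hbnd_int : ∀ a b : ℝ, IntervalIntegrable (fun r => c * (T - r) ^ n) volume a b :=
          fun a b => (Continuous.intervalIntegrable (by fun_prop) a b)
        have hmono2 : (∫ r in (↑t:ℝ)..s, |Hf r ((Θ^[n] ψ₁) (projIcc 0 T hT.le r)) i -
              Hf r ((Θ^[n] ψ₂) (projIcc 0 T hT.le r)) i|)
            ≤ ∫ r in (↑t:ℝ)..s, c * (T - r) ^ n := by
          refine intervalIntegral.integral_mono_on hs.1 habs_int (hbnd_int _ _) fun r hr => ?_
          have hrmem : r ∈ Icc (0:ℝ) T := ⟨le_trans t.2.1 hr.1, le_trans hr.2 hs.2⟩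
          have hproj : projIcc 0 T hT.le r = ⟨r, hrmem⟩ := projIcc_of_mem hT.le hrmem
          have h5 := hHlip r hrmem ((Θ^[n] ψ₁) (projIcc 0 T hT.le r))
            ((Θ^[n] ψ₂) (projIcc 0 T hT.le r)) i
          have h6 := ih ψ₁ ψ₂ ⟨r, hrmem⟩
          rw [hproj] at h5
          have h7 : dist ((Θ^[n] ψ₁) ⟨r, hrmem⟩) ((Θ^[n] ψ₂) ⟨r, hrmem⟩)
              ≤ K ^ n * (T - r) ^ n / (n.factorial : ℝ) * dist ψ₁ ψ₂ := h6
          have h8 : K * dist ((Θ^[n] ψ₁) ⟨r, hrmem⟩) ((Θ^[n] ψ₂) ⟨r, hrmem⟩)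
              ≤ K * (K ^ n * (T - r) ^ n / (n.factorial : ℝ) * dist ψ₁ ψ₂) :=
            mul_le_mul_of_nonneg_left h7 hK
          have h9 : K * (K ^ n * (T - r) ^ n / (n.factorial : ℝ) * dist ψ₁ ψ₂)
              = c * (T - r) ^ n := by rw [hc]; ring
          rw [hproj]
          calc |Hf r ((Θ^[n] ψ₁) ⟨r, hrmem⟩) i - Hf r ((Θ^[n] ψ₂) ⟨r, hrmem⟩) i|
              ≤ K * dist ((Θ^[n] ψ₁) ⟨r, hrmem⟩) ((Θ^[n] ψ₂) ⟨r, hrmem⟩) :=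
                hHlip r hrmem ((Θ^[n] ψ₁) ⟨r, hrmem⟩) ((Θ^[n] ψ₂) ⟨r, hrmem⟩) i
            _ ≤ c * (T - r) ^ n := le_of_le_of_eq h8 h9
        have hmono3 : (∫ r in (↑t:ℝ)..s, c * (T - r) ^ n)
            ≤ ∫ r in (↑t:ℝ)..T, c * (T - r) ^ n := by
          refine intervalIntegral.integral_mono_interval le_rfl hs.1 hs.2 ?_ (hbnd_int _ _)
          refine (ae_restrict_iff' measurableSet_Ioc).2 (ae_of_all _ fun r hr => ?_)
          have : (0:ℝ) ≤ T - r := sub_nonneg.2 hr.2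
          positivity
        have hval : (∫ r in (↑t:ℝ)..T, c * (T - r) ^ n) = c * ((T - ↑t) ^ (n+1) / ((n:ℝ)+1)) := by
          rw [intervalIntegral.integral_const_mul]
          have h10 : (∫ r in (↑t:ℝ)..T, (T - r) ^ n) = ∫ x in (T - T)..(T - ↑t), x ^ n :=
            intervalIntegral.integral_comp_sub_left (fun x => x ^ n) T
          rw [h10, sub_self, integral_pow]
          norm_num
        calc |∫ r in (↑t:ℝ)..s, (Hf r ((Θ^[n] ψ₁) (projIcc 0 T hT.le r)) i -
              Hf r ((Θ^[n] ψ₂) (projIcc 0 T hT.le r)) i)| ≤ _ := hmono1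
          _ ≤ _ := hmono2
          _ ≤ _ := hmono3
          _ = _ := hval
      have hfin : c * ((T - ↑t) ^ (n+1) / ((n:ℝ)+1))
          = K ^ (n+1) * (T - ↑t) ^ (n+1) / ((n+1).factorial : ℝ) * dist ψ₁ ψ₂ := by
        rw [hc, Nat.factorial_succ]
        have hnf : ((n.factorial : ℝ)) ≠ 0 := Nat.cast_ne_zero.2 n.factorial_ne_zero
        have hn1 : ((n:ℝ) + 1) ≠ 0 := by positivity
        push_cast
        field_simp
      rw [← hfin]
      exact abs_csInf_image_sub isCompact_Icc (nonempty_Icc.2 t.2.2)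
        ((hGtc _ i ↑t).continuousOn) ((hGtc _ i ↑t).continuousOn) hptw

  -- fixed point
  have hdistn : ∀ (n : ℕ) (ψ₁ ψ₂ : C(Icc (0:ℝ) T, Fin d → ℝ)),
      dist (Θ^[n] ψ₁) (Θ^[n] ψ₂) ≤ K ^ n * T ^ n / (n.factorial : ℝ) * dist ψ₁ ψ₂ := by
    intro n ψ₁ ψ₂
    have hge : 0 ≤ K ^ n * T ^ n / (n.factorial : ℝ) * dist ψ₁ ψ₂ := by positivity
    rw [ContinuousMap.dist_le hge]
    intro t
    refine le_trans (contract n ψ₁ ψ₂ t) ?_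
    have h1 : (T - ↑t) ^ n ≤ T ^ n :=
      pow_le_pow_left₀ (sub_nonneg.2 t.2.2) (by linarith [t.2.1]) n
    have h2 : (0:ℝ) < (n.factorial : ℝ) := by positivity
    have h3 : (0:ℝ) ≤ K ^ n := by positivity
    have h4 : K ^ n * (T - ↑t) ^ n ≤ K ^ n * T ^ n := mul_le_mul_of_nonneg_left h1 h3
    have h5 : K ^ n * (T - ↑t) ^ n / (n.factorial : ℝ) ≤ K ^ n * T ^ n / (n.factorial : ℝ) := by
      gcongr
    exact mul_le_mul_of_nonneg_right h5 dist_nonneg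
  obtain ⟨n, hn⟩ : ∃ n : ℕ, K ^ n * T ^ n / (n.factorial : ℝ) < 1 := by
    have h2 := FloorSemiring.tendsto_pow_div_factorial_atTop (K := ℝ) (K * T)
    have h3 := h2.eventually (gt_mem_nhds one_pos)
    obtain ⟨n, hn⟩ := h3.exists
    exact ⟨n, by rwa [mul_pow] at hn⟩
  have hκ0 : (0:ℝ) ≤ K ^ n * T ^ n / (n.factorial : ℝ) := by positivity
  have hcon : ContractingWith ⟨K ^ n * T ^ n / (n.factorial : ℝ), hκ0⟩ (Θ^[n]) := by
    constructor
    · exact_mod_cast hn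
    · exact LipschitzWith.of_dist_le_mul fun ψ₁ ψ₂ => hdistn n ψ₁ ψ₂
  set φhat : C(Icc (0:ℝ) T, Fin d → ℝ) := ContractingWith.fixedPoint (Θ^[n]) hcon with hφhat
  have hfix : Θ φhat = φhat := hcon.isFixedPt_fixedPoint_iterate

  set φt : ℝ → Fin d → ℝ := fun r => φhat (projIcc 0 T hT.le r) with hφtdef
  have heq : ∀ t, ∀ ht : t ∈ Icc (0:ℝ) T, ∀ i : Fin d,
      φt t i = sInf ((fun s => g s i + ∫ r in t..s, Hf r (φt r) i) '' Icc t T) := by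
    intro t ht i
    have h1 : φt t i = Θ φhat ⟨t, ht⟩ i := by
      rw [hfix, hφtdef]
      simp only
      rw [projIcc_of_mem hT.le ht]
    rw [h1, key_eq]
  have hfc : ∀ i, Continuous fun r => Hf r (φt r) i := fun i => hfψc φhat i
  have hfint : ∀ (i : Fin d) (a b : ℝ),
      IntervalIntegrable (fun r => Hf r (φt r) i) volume a b := fun i a b => hfψint φhat i a b
  have hGc : ∀ (i : Fin d) (a : ℝ), Continuous fun s => g s i + ∫ r in a..s, Hf r (φt r) i :=
    fun i a => hGtc φhat i a
  have hZ1 : ∀ i, φt T i = g T i := by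
    intro i
    rw [heq T hmemT i, Icc_self, image_singleton, csInf_singleton,
      intervalIntegral.integral_same, add_zero]
  have hZ2 : ∀ t ∈ Icc (0:ℝ) T, ∀ i, φt t i ≤ g t i := by
    intro t ht i
    rw [heq t ht i]
    have h2 := csInf_le (runMin_bddBelow ((hGc i t).continuousOn) ht)
      (⟨t, ⟨le_rfl, ht.2⟩, rfl⟩ : g t i + ∫ r in t..t, Hf r (φt r) i ∈
        (fun s => g s i + ∫ r in t..s, Hf r (φt r) i) '' Icc t T)
    simpa [intervalIntegral.integral_same] using h2
  have hcineq : ∀ (i : Fin d) t s, t ∈ Icc (0:ℝ) T → s ∈ Icc (0:ℝ) T → t ≤ s →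
      φt t i ≤ φt s i + ∫ r in t..s, Hf r (φt r) i := by
    intro i t s ht hs hts
    have h1 : ∀ σ ∈ Icc s T, φt t i - (∫ r in t..s, Hf r (φt r) i)
        ≤ g σ i + ∫ r in s..σ, Hf r (φt r) i := by
      intro σ hσ
      have h2 : φt t i ≤ g σ i + ∫ r in t..σ, Hf r (φt r) i := by
        rw [heq t ht i]
        exact csInf_le (runMin_bddBelow ((hGc i t).continuousOn) ht)
          ⟨σ, ⟨le_trans hts hσ.1, hσ.2⟩, rfl⟩
      have h3 : (∫ r in t..s, Hf r (φt r) i) + (∫ r in s..σ, Hf r (φt r) i)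
          = ∫ r in t..σ, Hf r (φt r) i :=
        intervalIntegral.integral_add_adjacent_intervals (hfint i t s) (hfint i s σ)
      linarith
    have h4 : φt t i - (∫ r in t..s, Hf r (φt r) i)
        ≤ sInf ((fun σ => g σ i + ∫ r in s..σ, Hf r (φt r) i) '' Icc s T) :=
      le_csInf (runMin_nonempty hs) (by rintro x ⟨σ, hσ, rfl⟩; exact h1 σ hσ)
    rw [heq s hs i]
    linarith
  have hdineq : ∀ (i : Fin d) t s, t ∈ Icc (0:ℝ) T → s ∈ Icc (0:ℝ) T → t ≤ s →
      (∀ r ∈ Icc t s, φt r i < g r i) →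
      φt s i + (∫ r in t..s, Hf r (φt r) i) ≤ φt t i := by
    intro i t s ht hs hts hlt
    obtain ⟨σ, hσ, hval⟩ := runMin_attained ((hGc i t).continuousOn) ht
    have hφteq : φt t i = g σ i + ∫ r in t..σ, Hf r (φt r) i := by rw [heq t ht i, hval]
    have hσmem : σ ∈ Icc (0:ℝ) T := ⟨le_trans ht.1 hσ.1, hσ.2⟩
    rcases le_or_gt σ s with hcase | hcase
    · exfalso
      have h5 := hcineq i t σ ht hσmem hσ.1
      have h6 := hlt σ ⟨hσ.1, hcase⟩
      linarith
    · have h7 : φt s i ≤ g σ i + ∫ r in s..σ, Hf r (φt r) i := by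
        rw [heq s hs i]
        exact csInf_le (runMin_bddBelow ((hGc i s).continuousOn) hs) ⟨σ, ⟨hcase.le, hσ.2⟩, rfl⟩
      have h8 : (∫ r in t..s, Hf r (φt r) i) + (∫ r in s..σ, Hf r (φt r) i)
          = ∫ r in t..σ, Hf r (φt r) i :=
        intervalIntegral.integral_add_adjacent_intervals (hfint i t s) (hfint i s σ)
      linarith

  have hprim : ∀ (i : Fin d) (a : ℝ), HasDerivAt (fun s => ∫ r in a..s, Hf r (φt r) i)
      (Hf a (φt a) i) a := fun i a =>
    intervalIntegral.integral_hasDerivAt_right (hfint i a a)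
      ((hfc i).stronglyMeasurable.stronglyMeasurableAtFilter) (hfc i).continuousAt
  have hkey : ∀ (i : Fin d) t, t ∈ Icc (0:ℝ) T → ∀ s ∈ Icc (0:ℝ) T, s ≠ t →
      0 ≤ slope (fun s' => φt s' i) t s
        + slope (fun s' => ∫ r in t..s', Hf r (φt r) i) t s := by
    intro i t ht s hs hne
    have hP0 : (∫ r in t..t, Hf r (φt r) i) = 0 := intervalIntegral.integral_same
    rw [slope_def_field, slope_def_field, hP0, sub_zero, ← add_div]
    rcases lt_or_gt_of_ne hne with hlt | hgt
    · have h5 := hcineq i s t hs ht hlt.le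
      have h6 : (∫ r in s..t, Hf r (φt r) i) = -(∫ r in t..s, Hf r (φt r) i) :=
        intervalIntegral.integral_symm t s
      refine div_nonneg_of_nonpos ?_ (by linarith)
      linarith
    · have h5 := hcineq i t s ht hs hgt.le
      refine div_nonneg ?_ (by linarith)
      linarith
  have hZ4 : ∀ t ∈ Icc (0:ℝ) T, ∀ i, ∀ D : ℝ, HasDerivAt (fun s => φt s i) D t →
      -(Hf t (φt t) i) ≤ D := by
    intro t ht i D hD
    have hsum : Tendsto (fun s => slope (fun s' => φt s' i) t s +
        slope (fun s' => ∫ r in t..s', Hf r (φt r) i) t s) (𝓝[≠] t)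
        (𝓝 (D + Hf t (φt t) i)) :=
      (hasDerivAt_iff_tendsto_slope.1 hD).add (hasDerivAt_iff_tendsto_slope.1 (hprim i t))
    rcases lt_or_eq_of_le ht.2 with htT | htT
    · have hmono : 𝓝[>] t ≤ 𝓝[≠] t := nhdsWithin_mono _ fun x hx => ne_of_gt hx
      have hev : ∀ᶠ s in 𝓝[>] t, 0 ≤ slope (fun s' => φt s' i) t s +
          slope (fun s' => ∫ r in t..s', Hf r (φt r) i) t s := by
        filter_upwards [Ioc_mem_nhdsGT_of_mem ⟨le_rfl, htT⟩] with s hs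
        exact hkey i t ht s ⟨le_trans ht.1 hs.1.le, hs.2⟩ (ne_of_gt hs.1)
      have := ge_of_tendsto (hsum.mono_left hmono) hev
      linarith
    · subst htT
      have hmono : 𝓝[<] t ≤ 𝓝[≠] t := nhdsWithin_mono _ fun x hx => ne_of_lt hx
      have hev : ∀ᶠ s in 𝓝[<] t, 0 ≤ slope (fun s' => φt s' i) t s +
          slope (fun s' => ∫ r in t..s', Hf r (φt r) i) t s := by
        filter_upwards [Ioo_mem_nhdsLT_of_mem ⟨hT, le_rfl⟩] with s hs
        exact hkey i t ht s ⟨hs.1.le, hs.2.le⟩ (ne_of_lt hs.2)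
      have := ge_of_tendsto (hsum.mono_left hmono) hev
      linarith
  have hZ3 : ∀ t ∈ Icc (0:ℝ) T, ∀ i, ∀ D : ℝ, HasDerivAt (fun s => φt s i) D t →
      φt t i < g t i → D ≤ -(Hf t (φt t) i) := by
    intro t ht i D hD hlt
    rcases lt_or_eq_of_le ht.2 with htT | htT
    · have hopen : IsOpen {r : ℝ | φt r i < g r i} :=
        isOpen_lt ((continuous_apply i).comp (he_cont φhat)) (hgc i)
      obtain ⟨ε, hε0, hball⟩ := Metric.isOpen_iff.1 hopen t hlt
      have hsum : Tendsto (fun s => slope (fun s' => φt s' i) t s +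
          slope (fun s' => ∫ r in t..s', Hf r (φt r) i) t s) (𝓝[≠] t)
          (𝓝 (D + Hf t (φt t) i)) :=
        (hasDerivAt_iff_tendsto_slope.1 hD).add (hasDerivAt_iff_tendsto_slope.1 (hprim i t))
      have hmono : 𝓝[>] t ≤ 𝓝[≠] t := nhdsWithin_mono _ fun x hx => ne_of_gt hx
      have hev : ∀ᶠ s in 𝓝[>] t, slope (fun s' => φt s' i) t s +
          slope (fun s' => ∫ r in t..s', Hf r (φt r) i) t s = 0 := by
        have hmem : Ioo t (min (t + ε) T) ∈ 𝓝[>] t :=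
          Ioo_mem_nhdsGT_of_mem ⟨le_rfl, lt_min (by linarith) htT⟩
        filter_upwards [hmem] with s hs
        have hsmem : s ∈ Icc (0:ℝ) T :=
          ⟨le_trans ht.1 hs.1.le, le_trans hs.2.le (min_le_right _ _)⟩
        have hltall : ∀ r ∈ Icc t s, φt r i < g r i := by
          intro r hr
          refine hball ?_
          rw [Metric.mem_ball, Real.dist_eq]
          have h9 : s < t + ε := lt_of_lt_of_le hs.2 (min_le_left _ _)
          rw [abs_of_nonneg (by linarith [hr.1])]
          linarith [hr.2]
        have h5 := hcineq i t s ht hsmem hs.1.le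
        have h6 := hdineq i t s ht hsmem hs.1.le hltall
        have hP0 : (∫ r in t..t, Hf r (φt r) i) = 0 := intervalIntegral.integral_same
        rw [slope_def_field, slope_def_field, hP0, sub_zero, ← add_div, div_eq_zero_iff]
        left
        linarith
      have h9 : D + Hf t (φt t) i = 0 :=
        tendsto_nhds_unique ((hsum.mono_left hmono).congr' hev) tendsto_const_nhds
      linarith
    · rw [htT, hZ1 i] at hlt
      exact absurd hlt (lt_irrefl _)

  have hAC : ∀ i, IsAC T (fun r => φt r i) := by
    intro i
    obtain ⟨L, hL0, hLip⟩ := hGlip φhat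
    set G0 : ℝ → ℝ := fun s => g s i + ∫ r in (0:ℝ)..s, Hf r (φt r) i with hG0
    set mh : ℝ → ℝ := fun τ => sInf (G0 '' Icc τ T) with hmh
    set pr : ℝ → ℝ := fun r => max 0 (min r T) with hpr
    have hprmem : ∀ r, pr r ∈ Icc (0:ℝ) T := fun r =>
      ⟨le_max_left _ _, max_le hT.le (min_le_right _ _)⟩
    have hpreq : ∀ r ∈ Icc (0:ℝ) T, pr r = r := fun r hr => by
      rw [hpr]; simp only; rw [min_eq_left hr.2, max_eq_right hr.1]
    have hG0c : ContinuousOn G0 (Icc 0 T) := (hGc i 0).continuousOn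
    have hG0lip : ∀ s₁ ∈ Icc (0:ℝ) T, ∀ s₂ ∈ Icc (0:ℝ) T, |G0 s₁ - G0 s₂| ≤ L * |s₁ - s₂| :=
      fun s₁ a s₂ b => hLip i s₁ a s₂ b
    have hmono : Monotone (fun r => mh (pr r)) := by
      intro a b hab
      have hpab : pr a ≤ pr b := max_le_max le_rfl (min_le_min hab le_rfl)
      exact runMin_mono hG0c (hprmem a) hpab (hprmem b)
    have hlipm : ∀ a b : ℝ, a ≤ b → mh (pr b) - mh (pr a) ≤ L * (b - a) := by
      intro a b hab
      have hpab : pr a ≤ pr b := max_le_max le_rfl (min_le_min hab le_rfl)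
      have h1 := runMin_lip hG0c hL0 hG0lip (hprmem a) hpab (hprmem b)
      have hminmono : min a T ≤ min b T := min_le_min hab le_rfl
      have hminle : min b T - min a T ≤ b - a := by
        rcases le_total b T with hb | hb <;> rcases le_total a T with ha | ha
        · rw [min_eq_left hb, min_eq_left ha]
        · rw [min_eq_left hb, min_eq_right ha]; linarith
        · rw [min_eq_right hb, min_eq_left ha]; linarith
        · rw [min_eq_right hb, min_eq_right ha]; linarith
      have h2 : pr b - pr a ≤ b - a := by
        rw [hpr]; simp only
        rcases le_total (0:ℝ) (min a T) with h0a | h0a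
        · rw [max_eq_right h0a, max_eq_right (le_trans h0a hminmono)]; linarith
        · rw [max_eq_left h0a]
          rcases le_total (0:ℝ) (min b T) with h0b | h0b
          · rw [max_eq_right h0b]; linarith
          · rw [max_eq_left h0b]; linarith
      have h3 : L * (pr b - pr a) ≤ L * (b - a) := mul_le_mul_of_nonneg_left h2 hL0
      linarith
    obtain ⟨ρ, hρint, hρrepr⟩ := monotone_lipschitz_repr T hL0 hmono hlipm
    refine ⟨fun sx => ρ sx - Hf sx (φt sx) i, ?_, ?_⟩
    · exact hρint.sub ((hfc i).integrableOn_Icc)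
    · intro t ht
      have hform : ∀ τ, ∀ hτ : τ ∈ Icc (0:ℝ) T,
          φt τ i = mh τ - ∫ r in (0:ℝ)..τ, Hf r (φt r) i := by
        intro τ hτ
        have h1 : φt τ i = Θ φhat ⟨τ, hτ⟩ i := by
          rw [hfix, hφtdef]; simp only; rw [projIcc_of_mem hT.le hτ]
        rw [h1]
        rfl
      have hsub : ∫ sx in (0:ℝ)..t, (ρ sx - Hf sx (φt sx) i)
          = (∫ sx in (0:ℝ)..t, ρ sx) - ∫ sx in (0:ℝ)..t, Hf sx (φt sx) i := by
        refine intervalIntegral.integral_sub ?_ (hfint i 0 t)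
        refine IntegrableOn.intervalIntegrable (hρint.mono_set ?_)
        rw [uIcc_of_le ht.1]
        exact Icc_subset_Icc le_rfl ht.2
      have hrt := hρrepr t ht.1
      rw [hpreq t ht, hpreq 0 hmem0] at hrt
      have h0form := hform 0 hmem0
      have htform := hform t ht
      rw [intervalIntegral.integral_same] at h0form
      show φt t i = φt 0 i + ∫ sx in (0:ℝ)..t, (ρ sx - Hf sx (φt sx) i)
      rw [hsub, htform, h0form, hrt]
      ring
  exact ⟨φt, hAC, hZ1, hZ2, hZ3, hZ4⟩

end Zach

/-- existence part of Theorem 2: under (H1)–(H4) there exists a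
function `φ ∈ AC` satisfying the Zachrisson equation with unilateral constraints
(Z1)–(Z4). -/
theorem zachrisson_existence {d : ℕ} {T Lg : ℝ} (hT : 0 ≤ T)
    {U V : Type*} [MetricSpace U] [CompactSpace U] [Nonempty U]
    [MetricSpace V] [CompactSpace V] [Nonempty V]
    (Q : ℝ → U → V → Fin d → Fin d → ℝ) (h : ℝ → Fin d → U → V → ℝ)
    (g : ℝ → Fin d → ℝ)
    -- (H2) continuity
    (hQc : ∀ i j, Continuous fun p : ℝ × U × V => Q p.1 p.2.1 p.2.2 i j)
    (hhc : ∀ i, Continuous fun p : ℝ × U × V => h p.1 i p.2.1 p.2.2)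
    (hgc : ∀ i, Continuous fun t => g t i)
    -- Q is a Kolmogorov matrix
    (hQpos : ∀ t u v i j, i ≠ j → 0 ≤ Q t u v i j)
    (hQsum : ∀ t u v i, ∑ j, Q t u v i j = 0)
    -- (H3) g Lipschitz in time
    (hLg : ∀ i, ∀ s r : ℝ, |g s i - g r i| ≤ Lg * |s - r|)
    -- Hamiltonian
    (Ham : Fin d → ℝ → (Fin d → ℝ) → ℝ)
    (hHamDef : ∀ i t w, Ham i t w =
      ⨅ u : U, ⨆ v : V, (∑ j, Q t u v i j * w j + h t i u v))
    -- (H4) Isaacs condition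
    (hIsaacs : ∀ i t (w : Fin d → ℝ),
      (⨅ u : U, ⨆ v : V, (∑ j, Q t u v i j * w j + h t i u v)) =
        (⨆ v : V, ⨅ u : U, (∑ j, Q t u v i j * w j + h t i u v))) :
    ∃ φ : ℝ → Fin d → ℝ,
      (∀ i, IsAC T (fun t => φ t i)) ∧
      (∀ i, φ T i = g T i) ∧
      (∀ t ∈ Icc 0 T, ∀ i, φ t i ≤ g t i) ∧
      (∀ t ∈ Icc 0 T, ∀ i, ∀ D : ℝ, HasDerivAt (fun s => φ s i) D t →
        φ t i < g t i → D ≤ -(Ham i t (φ t))) ∧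
      (∀ t ∈ Icc 0 T, ∀ i, ∀ D : ℝ, HasDerivAt (fun s => φ s i) D t →
        -(Ham i t (φ t)) ≤ D) := by
  classical
  rcases eq_or_lt_of_le hT with hT0 | hTpos
  · -- degenerate case T = 0
    subst hT0
    have habs : ∀ (c : ℝ) (D : ℝ), ¬ HasDerivAt (fun s : ℝ => c + |s|) D 0 := by
      intro c D hD
      have h2 := hD.sub (hasDerivAt_const (0:ℝ) c)
      have h3 : (fun s : ℝ => c + |s| - c) = fun s : ℝ => |s| := by funext s; ring
      rw [show ((fun s : ℝ => c + |s|) - fun _ => c) = fun s : ℝ => |s| from h3] at h2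
      exact not_differentiableAt_abs_zero h2.differentiableAt
    refine ⟨fun t i => g 0 i + |t|, ?_, ?_, ?_, ?_, ?_⟩
    · intro i
      refine ⟨fun _ => 0, (integrable_zero _ _ _).integrableOn, ?_⟩
      intro t ht
      rw [Icc_self, mem_singleton_iff] at ht
      subst ht
      simp
    · intro i; simp
    · intro t ht i
      rw [Icc_self, mem_singleton_iff] at ht; subst ht; simp
    · intro t ht i D hD hlt
      rw [Icc_self, mem_singleton_iff] at ht; subst ht
      exact absurd hD (habs _ _)
    · intro t ht i D hD
      rw [Icc_self, mem_singleton_iff] at ht; subst ht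
      exact absurd hD (habs _ _)
  · obtain ⟨K, hK0, hKlip⟩ := Zach.ham_lipK Q h hT hQc hhc
    set Hf : ℝ → (Fin d → ℝ) → Fin d → ℝ := fun t w i => Ham i t w with hHf
    have hHfc : Continuous fun p : ℝ × (Fin d → ℝ) => Hf p.1 p.2 := by
      refine continuous_pi fun i => ?_
      have h1 := Zach.ham_cont Q h hQc hhc i
      have h2 : (fun p : ℝ × (Fin d → ℝ) => Hf p.1 p.2 i)
          = fun p : ℝ × (Fin d → ℝ) =>
            ⨅ u : U, ⨆ v : V, (∑ j, Q p.1 u v i j * p.2 j + h p.1 i u v) := by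
        funext p
        rw [hHf]
        exact hHamDef i p.1 p.2
      rw [h2]
      exact h1
    have hHflip : ∀ t ∈ Icc (0:ℝ) T, ∀ (w w' : Fin d → ℝ) (i : Fin d),
        |Hf t w i - Hf t w' i| ≤ K * dist w w' := by
      intro t ht w w' i
      rw [hHf]
      simp only
      rw [hHamDef i t w, hHamDef i t w']
      exact hKlip t ht w w' i
    have hLg' : ∀ i, ∀ s r : ℝ, |g s i - g r i| ≤ max Lg 0 * |s - r| := fun i s r =>
      le_trans (hLg i s r) (mul_le_mul_of_nonneg_right (le_max_left _ _) (abs_nonneg _))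
    obtain ⟨φ, hac, h1, h2, h3, h4⟩ :=
      Zach.core hTpos (le_max_right Lg 0) hK0 g hgc hLg' Hf hHfc hHflip
    exact ⟨φ, hac, h1, h2, fun t ht i D hD hlt => h3 t ht i D hD hlt,
      fun t ht i D hD => h4 t ht i D hD⟩
end
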